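/- arXiv:2002.10498 — 5 statements merged into one kernel-verified Lean document; each statement's English description precedes it below -/
import Mathlib

section
/- In a strongly connected graph, every walk that is a subwalk of all closed arc-covering walks is an omnitig; equivalently, if a walk W is not an omnitig (it has a forbidden path), then there exists a closed arc-covering walk of which W is not a subwalk, provided the graph is not a closed path. -/
/-- A directed multigraph: arcs `E` with tail and head maps into nodes `V`. -/
structure MultiDigraph (V E : Type) where
  tail : E → V
  head : E → V

namespace MultiDigraph

variable {V E : Type} (G : MultiDigraph V E)

/-- A walk is a (possibly empty) list of arcs that chain head-to-tail. -/
def IsWalk (W : List E) : Prop := W.Chain' (fun a b => G.head a = G.tail b)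

/-- The node sequence `v₀, v₁, …, v_ℓ` of a nonempty walk (empty for the empty walk). -/
def nodes : List E → List V
  | [] => []
  | e :: W => G.tail e :: (e :: W).map G.head

/-- The start node of a nonempty walk. -/
def src (W : List E) : Option V := W.head?.map G.tail

/-- The end node of a nonempty walk. -/
def dst (W : List E) : Option V := W.getLast?.map G.head

/-- A path: a walk whose nodes are all distinct, except that the last node may
equal the first one (closed path). -/
def IsPath (W : List E) : Prop :=
  G.IsWalk W ∧ (G.nodes W).dropLast.Nodup ∧ (G.nodes W).tail.Nodup

/-- `P` is a forbidden path for the pair of arcs `(eR, eL)`: a non-empty path from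
`tail eR` to `head eL` whose first arc differs from `eR` and last arc differs from `eL`. -/
def ForbiddenPath (eR eL : E) (P : List E) : Prop :=
  G.IsPath P ∧ P ≠ [] ∧ G.src P = some (G.tail eR) ∧ G.dst P = some (G.head eL) ∧
    P.head? ≠ some eR ∧ P.getLast? ≠ some eL

/-- A walk `e₀ … e_ℓ` is an omnitig if for all `1 ≤ i ≤ j ≤ ℓ` there is no
forbidden path from `tail e_j` to `head e_{i-1}`. -/
def IsOmnitig (W : List E) : Prop :=
  G.IsWalk W ∧ ∀ i j : ℕ, (hi : 1 ≤ i) → (hij : i ≤ j) → (hj : j < W.length) →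
    ¬ ∃ P, G.ForbiddenPath (W[j]'hj) (W[i-1]'(by omega)) P

/-- `u` reaches `v` by a (possibly empty) walk. -/
def Reaches (u v : V) : Prop :=
  u = v ∨ ∃ W, G.IsWalk W ∧ G.src W = some u ∧ G.dst W = some v

def StronglyConnected : Prop := ∀ u v : V, G.Reaches u v

/-- In-degree of a node. -/
noncomputable def inDeg (v : V) : ℕ := Nat.card {e : E // G.head e = v}

/-- Out-degree of a node. -/
noncomputable def outDeg (v : V) : ℕ := Nat.card {e : E // G.tail e = v}

def JoinArc (e : E) : Prop := 1 < G.inDeg (G.head e)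

def SplitArc (e : E) : Prop := 1 < G.outDeg (G.tail e)

def Bivalent (v : V) : Prop := 1 < G.inDeg v ∧ 1 < G.outDeg v

def JoinFree (W : List E) : Prop := ∀ e ∈ W, ¬ G.JoinArc e

def SplitFree (W : List E) : Prop := ∀ e ∈ W, ¬ G.SplitArc e

/-- A closed walk covering every arc at least once. -/
def IsClosedArcCovering (W : List E) : Prop :=
  G.IsWalk W ∧ W ≠ [] ∧ G.src W = G.dst W ∧ ∀ e : E, e ∈ W

/-- `W'` occurs as a cyclic (wrap-around) subwalk of the closed walk `W`. -/
def IsCyclicSubwalk (W' W : List E) : Prop :=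
  ∃ i : ℕ, ∀ k : ℕ, k < W'.length → W'[k]? = W[(i + k) % W.length]?

/-- The graph consists of a single closed path through all nodes and arcs. -/
def IsClosedPathGraph : Prop :=
  ∃ C : List E, G.IsPath C ∧ C ≠ [] ∧ G.src C = G.dst C ∧ C.Nodup ∧
    (∀ e : E, e ∈ C) ∧ (∀ v : V, v ∈ G.nodes C)

/-- Compressed graph: no biunivocal nodes and no biunivocal arcs. -/
def Compressed : Prop :=
  (∀ v : V, 1 < G.inDeg v ∨ 1 < G.outDeg v) ∧
  (∀ e : E, G.JoinArc e ∨ G.SplitArc e)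

/-- `u` reaches `v` by a (possibly empty) path avoiding the arc `f`. -/
def ReachesAvoid (f : E) (u v : V) : Prop :=
  u = v ∨ ∃ P, G.IsPath P ∧ f ∉ P ∧ G.src P = some u ∧ G.dst P = some v

/-- A maximal omnitig: an omnitig extendable neither to the left nor to the right. -/
def IsMaximalOmnitig (W : List E) : Prop :=
  G.IsOmnitig W ∧ (∀ e : E, ¬ G.IsOmnitig (e :: W)) ∧ (∀ e : E, ¬ G.IsOmnitig (W ++ [e]))

/-- The reverse graph. -/
def rev : MultiDigraph V E := ⟨G.head, G.tail⟩

/-- Nodes reachable from `v` by a join-free path. -/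
def Rplus (v : V) : Set V :=
  {u | u = v ∨ ∃ W, G.IsPath W ∧ G.JoinFree W ∧ G.src W = some v ∧ G.dst W = some u}

/-- Nodes reaching `v` by a split-free path. -/
def Rminus (v : V) : Set V :=
  {u | u = v ∨ ∃ W, G.IsPath W ∧ G.SplitFree W ∧ G.src W = some u ∧ G.dst W = some v}

/-- The node set of the macronode centered at `v`. -/
def macronodeSet (v : V) : Set V := G.Rplus v ∪ G.Rminus v

/-- The graph obtained from `G` by contracting the arc `e`. -/
def contract [DecidableEq V] (e : E) : MultiDigraph V {a : E // a ≠ e} where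
  tail a := if G.tail a.1 = G.head e then G.tail e else G.tail a.1
  head a := if G.head a.1 = G.head e then G.tail e else G.head a.1

end MultiDigraph

namespace MultiDigraph

variable {V E : Type} (G : MultiDigraph V E)

lemma walk_getElem {W : List E} (h : G.IsWalk W) {k : ℕ} (hk : k + 1 < W.length) :
    G.head (W[k]'(by omega)) = G.tail (W[k+1]'hk) := by
  rw [IsWalk, List.Chain', List.isChain_iff_getElem] at h
  simpa using h k (by omega)

/-- Walk from `u` to `v`, in a form that also makes sense for the empty walk. -/
def WFT (u v : V) (L : List E) : Prop :=
  G.IsWalk L ∧ ((L = [] ∧ u = v) ∨ (G.src L = some u ∧ G.dst L = some v))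

lemma wft_append {u v w : V} {L₁ L₂ : List E} (h₁ : G.WFT u v L₁) (h₂ : G.WFT v w L₂) :
    G.WFT u w (L₁ ++ L₂) := by
  obtain ⟨hw₁, h₁⟩ := h₁
  obtain ⟨hw₂, h₂⟩ := h₂
  rcases h₁ with ⟨rfl, rfl⟩ | ⟨hs₁, hd₁⟩
  · exact ⟨hw₂, by simpa using h₂⟩
  rcases h₂ with ⟨rfl, rfl⟩ | ⟨hs₂, hd₂⟩
  · exact ⟨by simpa using hw₁, by simpa using Or.inr ⟨hs₁, hd₁⟩⟩
  have hne₁ : L₁ ≠ [] := by rintro rfl; simp [src] at hs₁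
  have hne₂ : L₂ ≠ [] := by rintro rfl; simp [src] at hs₂
  refine ⟨?_, Or.inr ⟨?_, ?_⟩⟩
  · refine List.IsChain.append hw₁ hw₂ ?_
    intro x hx y hy
    rw [Option.mem_def] at hx hy
    rw [dst, hx] at hd₁
    rw [src, hy] at hs₂
    simp only [Option.map_some, Option.some.injEq] at hd₁ hs₂
    rw [hd₁, hs₂]
  · rw [src, List.head?_append_of_ne_nil _ hne₁, ← src, hs₁]
  · rw [dst, List.getLast?_append_of_ne_nil _ hne₂, ← dst, hd₂]

open Classical in
noncomputable def conn (u v : V) : List E :=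
  if h : ∃ P, G.IsWalk P ∧ G.src P = some u ∧ G.dst P = some v then h.choose else []

lemma conn_spec (hG : G.StronglyConnected) (u v : V) : G.WFT u v (G.conn u v) := by
  rw [conn]
  split_ifs with h
  · obtain ⟨hw, hs, hd⟩ := h.choose_spec
    exact ⟨hw, Or.inr ⟨hs, hd⟩⟩
  · rcases hG u v with rfl | hx
    · exact ⟨List.isChain_nil, Or.inl ⟨rfl, rfl⟩⟩
    · exact absurd hx h

noncomputable def chainArcs : V → List E → List E
  | _, [] => []
  | u, e :: l => G.conn u (G.tail e) ++ e :: chainArcs (G.head e) l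

lemma chainArcs_spec (hG : G.StronglyConnected) :
    ∀ (l : List E) (u : V), ∃ z, G.WFT u z (G.chainArcs u l) ∧
      ∀ e ∈ l, e ∈ G.chainArcs u l
  | [], u => ⟨u, ⟨List.isChain_nil, Or.inl ⟨rfl, rfl⟩⟩, by simp⟩
  | e :: l, u => by
    obtain ⟨z, hz, hmem⟩ := chainArcs_spec hG l (G.head e)
    refine ⟨z, ?_, ?_⟩
    · have h1 := G.conn_spec hG u (G.tail e)
      have h2 : G.WFT (G.tail e) (G.head e) [e] :=
        ⟨List.isChain_singleton _, Or.inr ⟨rfl, by simp [dst]⟩⟩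
      have h3 := G.wft_append h1 (G.wft_append h2 hz)
      show G.WFT u z (G.conn u (G.tail e) ++ e :: G.chainArcs (G.head e) l)
      simpa using h3
    · intro e' he'
      show e' ∈ G.conn u (G.tail e) ++ e :: G.chainArcs (G.head e) l
      rcases List.mem_cons.1 he' with rfl | h
      · exact List.mem_append_right _ List.mem_cons_self
      · exact List.mem_append_right _ (List.mem_cons_of_mem _ (hmem _ h))

lemma wft_flatMap {f : E → List E} (hf : ∀ e, G.WFT (G.tail e) (G.head e) (f e)) :
    ∀ (L : List E) (u v : V), G.WFT u v L → G.WFT u v (L.flatMap f) := by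
  intro L
  induction L with
  | nil => intro u v h; simpa using h
  | cons e l ih =>
    intro u v h
    obtain ⟨hw, h2⟩ := h
    rcases h2 with ⟨h, -⟩ | ⟨hs, hd⟩
    · exact absurd h (by simp)
    have hu : u = G.tail e := by
      simp only [src, List.head?_cons, Option.map_some, Option.some.injEq] at hs
      exact hs.symm
    subst hu
    have hnext : G.WFT (G.head e) v l := by
      match l, hw, hd with
      | [], hw, hd =>
        refine ⟨List.isChain_nil, Or.inl ⟨rfl, ?_⟩⟩
        simpa [dst] using hd
      | e₂ :: l₂, hw, hd =>
        rw [IsWalk, List.Chain', List.isChain_cons_cons] at hw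
        refine ⟨hw.2, Or.inr ⟨?_, ?_⟩⟩
        · simp [src, hw.1]
        · simpa [dst, List.getLast?_cons_cons] using hd
    rw [List.flatMap_cons]
    exact G.wft_append (hf e) (ih (G.head e) v hnext)

lemma star_claim [DecidableEq E] (ej lastP : E) (Z' : List E) (t : ℕ)
    (ht1 : 1 ≤ t) (ht : t ≤ Z'.length)
    (hlast : Z'[Z'.length - t]? = some lastP) (hnot : ej ∉ Z') :
    ∀ (L : List E) (p : ℕ),
      (L.flatMap (fun e => if e = ej then Z' ++ [ej] else [e]))[p]? = some ej →
      t ≤ p ∧ (L.flatMap (fun e => if e = ej then Z' ++ [ej] else [e]))[p - t]? = some lastP := by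
  intro L
  induction L with
  | nil => intro p hp; simp at hp
  | cons e l ih =>
    intro p hp
    simp only [List.flatMap_cons] at hp ⊢
    by_cases he : e = ej
    · subst he
      rw [if_pos rfl, List.append_assoc] at hp ⊢
      rcases lt_trichotomy p Z'.length with h | h | h
      · rw [List.getElem?_append_left h] at hp
        obtain ⟨hlt, hh⟩ := List.getElem?_eq_some_iff.1 hp
        exact absurd (hh ▸ List.getElem_mem hlt) hnot
      · subst h
        refine ⟨ht, ?_⟩
        rw [List.getElem?_append_left (by omega), hlast]
      · rw [List.getElem?_append_right (le_of_lt h),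
          List.getElem?_append_right (by simp only [List.length_singleton]; omega)] at hp
        simp only [List.length_singleton] at hp
        obtain ⟨h1, h2⟩ := ih (p - Z'.length - 1) hp
        refine ⟨by omega, ?_⟩
        rw [List.getElem?_append_right (by omega),
          List.getElem?_append_right (by simp only [List.length_singleton]; omega)]
        simp only [List.length_singleton]
        rw [show p - t - Z'.length - 1 = p - Z'.length - 1 - t by omega]
        exact h2
    · rw [if_neg he] at hp ⊢
      rcases Nat.eq_zero_or_pos p with rfl | hpos
      · rw [List.getElem?_append_left (by simp)] at hp
        simp at hp
        exact absurd hp he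
      · rw [List.getElem?_append_right (by simp only [List.length_singleton]; omega)] at hp
        simp only [List.length_singleton] at hp
        obtain ⟨h1, h2⟩ := ih (p - 1) hp
        refine ⟨by omega, ?_⟩
        rw [List.getElem?_append_right (by simp only [List.length_singleton]; omega)]
        simp only [List.length_singleton]
        rw [show p - t - 1 = p - 1 - t by omega]
        exact h2

lemma not_mem_path {P : List E} (hP : G.IsPath P) (e : E)
    (hsrc : G.src P = some (G.tail e)) (hhd : P.head? ≠ some e) : e ∉ P := by
  intro hmem
  obtain ⟨k, hk, hPk⟩ := List.mem_iff_getElem.1 hmem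
  obtain ⟨p, l, rfl⟩ : ∃ p l, P = p :: l := by
    cases P with
    | nil => simp at hk
    | cons p l => exact ⟨p, l, rfl⟩
  have hsrc' : G.tail p = G.tail e := by
    simpa [src] using hsrc
  rcases Nat.eq_zero_or_pos k with rfl | hkpos
  · exact hhd (by simpa using congrArg some hPk)
  have hchain : G.head ((p :: l)[k-1]'(by omega)) = G.tail ((p :: l)[k]'hk) := by
    have h1 := G.walk_getElem hP.1 (k := k - 1) (hk := by omega)
    simpa only [Nat.sub_add_cancel hkpos] using h1
  have hdrop : (G.nodes (p :: l)).dropLast = G.tail p :: ((p :: l).map G.head).dropLast := by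
    show (G.tail p :: (p :: l).map G.head).dropLast = _
    rw [List.dropLast_cons_of_ne_nil (by simp)]
  have hnd := hP.2.1
  rw [hdrop] at hnd
  have hlen2 : ((p :: l).map G.head).dropLast.length = l.length := by simp
  have hlt0 : 0 < (G.tail p :: ((p :: l).map G.head).dropLast).length := by simp
  have hltk : k < (G.tail p :: ((p :: l).map G.head).dropLast).length := by
    simp only [List.length_cons, hlen2]
    simpa using hk
  have hkk : (G.tail p :: ((p :: l).map G.head).dropLast)[k]'hltk
      = G.head ((p :: l)[k-1]'(by omega)) := by
    rw [List.getElem_cons]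
    split
    · omega
    · rw [List.getElem_dropLast, List.getElem_map]
  have heq : (G.tail p :: ((p :: l).map G.head).dropLast)[k]'hltk
      = (G.tail p :: ((p :: l).map G.head).dropLast)[0]'hlt0 := by
    show _ = G.tail p
    rw [hkk, hchain, hPk, hsrc']
  have := (hnd.getElem_inj_iff).1 heq
  omega

end MultiDigraph

/-- In a strongly connected graph that is not a closed path, every
walk that is not an omnitig fails to be a (cyclic) subwalk of some closed
arc-covering walk. -/
theorem stmt_4 {V E : Type} [Fintype V] [Fintype E]
    (G : MultiDigraph V E) (hG : G.StronglyConnected)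
    (hnp : ¬ G.IsClosedPathGraph)
    (W : List E) (hW : G.IsWalk W) (hno : ¬ G.IsOmnitig W) :
    ∃ C : List E, G.IsClosedArcCovering C ∧ ¬ MultiDigraph.IsCyclicSubwalk W C := by
  classical
  -- extract a witness minimizing `j - i`
  have hex : ∃ d, ∃ i, ∃ j, ∃ hi : 1 ≤ i, ∃ hij : i ≤ j, ∃ hj : j < W.length,
      j - i = d ∧ ∃ P, G.ForbiddenPath (W[j]'hj) (W[i-1]'(by omega)) P := by
    by_contra h
    push_neg at h
    refine hno ⟨hW, fun i j hi hij hj hP => ?_⟩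
    obtain ⟨P, hPF⟩ := hP
    exact h (j - i) i j hi hij hj rfl P hPF
  obtain ⟨i, j, hi, hij, hj, hd, P, hP⟩ := Nat.find_spec hex
  have hmin : ∀ m, m < j - i → ¬ ∃ i', ∃ j', ∃ hi' : 1 ≤ i', ∃ hij' : i' ≤ j',
      ∃ hj' : j' < W.length, j' - i' = m ∧
        ∃ P, G.ForbiddenPath (W[j']'hj')
          (W[i'-1]'(Nat.lt_of_le_of_lt (le_trans (Nat.sub_le i' 1) hij') hj')) P := by
    intro m hm
    exact Nat.find_min hex (by omega)
  clear hd hex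
  obtain ⟨hPpath, hPne, hPsrc, hPdst, hPhd, hPlast⟩ := hP
  have hj1 : i - 1 < W.length := by omega
  set ej : E := W[j]'hj with hej
  set eL : E := W[i-1]'hj1 with heL
  have hejP : ej ∉ P := G.not_mem_path hPpath ej hPsrc hPhd
  set M : List E := (W.drop i).take (j - i) with hM
  have hMlen : M.length = j - i := by
    rw [hM, List.length_take, List.length_drop]; omega
  have hMget : ∀ m (hm : m < j - i), M[m]'(by omega) = W[i+m]'(by omega) := by
    intro m hm
    have h1 : M[m]? = W[i+m]? := by
      rw [hM, List.getElem?_take_of_lt hm, List.getElem?_drop]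
    have h3 : M[m]? = some (M[m]'(by omega)) := List.getElem?_eq_getElem (by omega)
    rw [h1, List.getElem?_eq_getElem (show i + m < W.length by omega)] at h3
    exact (Option.some_inj.1 h3).symm
  have hejM : ej ∉ M := by
    intro hmem
    obtain ⟨m, hm, hme⟩ := List.mem_iff_getElem.1 hmem
    rw [hMlen] at hm
    have hW' : i + m < W.length := by omega
    refine hmin m (by omega) ?_
    refine ⟨i, i + m, hi, by omega, hW', by omega, P, ?_⟩
    have hme' : W[i + m]'hW' = ej := by
      rw [← hMget m hm]; exact hme
    rw [hme']
    exact ⟨hPpath, hPne, hPsrc, hPdst, hPhd, hPlast⟩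
  set Z' : List E := P ++ M with hZ
  have hPlen : 1 ≤ P.length := List.length_pos_iff.2 hPne
  set t : ℕ := j - i + 1 with htdef
  have ht1 : 1 ≤ t := by omega
  have hZlen : Z'.length = P.length + (j - i) := by rw [hZ]; simp [hMlen]
  have ht : t ≤ Z'.length := by omega
  have hlastP : P.getLast? = some (P.getLast hPne) := List.getLast?_eq_getLast hPne
  have hZlast : Z'[Z'.length - t]? = some (P.getLast hPne) := by
    have h1 : Z'.length - t = P.length - 1 := by omega
    rw [h1, hZ, List.getElem?_append_left (by omega : P.length - 1 < P.length),
      ← List.getLast?_eq_getElem?]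
    exact hlastP
  have hejZ : ej ∉ Z' := by
    rw [hZ]
    exact fun h => (List.mem_append.1 h).elim hejP hejM
  -- the chain facts about W
  have hchainW : ∀ k (hk : k + 1 < W.length),
      G.head (W[k]'(by omega)) = G.tail (W[k+1]'hk) := fun k hk => G.walk_getElem hW hk
  have hheL : G.head eL = G.tail (W[i]'(by omega)) := by
    have h1 := hchainW (i-1) (by omega)
    simpa only [Nat.sub_add_cancel hi] using h1
  -- Z' ++ [ej] is a closed-ish walk from tail ej to head ej
  have wP : G.WFT (G.tail ej) (G.head eL) P := ⟨hPpath.1, Or.inr ⟨hPsrc, hPdst⟩⟩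
  have hMwalk : G.IsWalk M := by
    refine List.IsChain.infix hW ?_
    rw [hM]
    exact ((List.take_prefix _ _).isInfix).trans ((List.drop_suffix _ _).isInfix)
  have wM : G.WFT (G.head eL) (G.tail ej) M := by
    rcases Nat.eq_zero_or_pos (j - i) with h0 | hpos
    · have hij' : i = j := by omega
      subst hij'
      have hMe : M = [] := by rw [hM, h0]; simp
      refine ⟨by rw [hMe]; exact List.isChain_nil, Or.inl ⟨hMe, ?_⟩⟩
      rw [hej]
      exact hheL
    · have hMne : M ≠ [] := by
        intro h; rw [h] at hMlen; simp at hMlen; omega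
      refine ⟨hMwalk, Or.inr ⟨?_, ?_⟩⟩
      · rw [MultiDigraph.src, List.head?_eq_getElem?,
          List.getElem?_eq_getElem (by omega : 0 < M.length)]
        simp only [Option.map_some, Option.some.injEq]
        have hg := hMget 0 (by omega)
        rw [hg]
        simp only [Nat.add_zero]
        exact hheL.symm
      · rw [MultiDigraph.dst, List.getLast?_eq_getElem?,
          List.getElem?_eq_getElem (by omega : M.length - 1 < M.length)]
        simp only [Option.map_some, Option.some.injEq]
        have hg : M[M.length - 1]'(by omega) = W[i + (j - i - 1)]'(by omega) := by
          simp only [hMlen]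
          exact hMget (j - i - 1) (by omega)
        have h2 := hchainW (j-1) (by omega)
        simp only [show j - 1 + 1 = j from by omega] at h2
        rw [hg]
        simp only [show i + (j - i - 1) = j - 1 from by omega]
        rw [hej]
        exact h2
  have wE : G.WFT (G.tail ej) (G.head ej) [ej] :=
    ⟨List.isChain_singleton _, Or.inr ⟨rfl, by simp [MultiDigraph.dst]⟩⟩
  have hf : ∀ e, G.WFT (G.tail e) (G.head e)
      ((fun e => if e = ej then Z' ++ [ej] else [e]) e) := by
    intro e
    by_cases he : e = ej
    · subst he
      simp only [if_pos rfl]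
      exact G.wft_append (G.wft_append wP wM) wE
    · simp only [if_neg he]
      exact ⟨List.isChain_singleton _, Or.inr ⟨rfl, by simp [MultiDigraph.dst]⟩⟩
  -- the base covering closed walk
  obtain ⟨z, hTz, hTmem⟩ := G.chainArcs_spec hG (Finset.univ : Finset E).toList (G.tail ej)
  set C0 : List E := G.chainArcs (G.tail ej) (Finset.univ : Finset E).toList ++
    G.conn z (G.tail ej) with hC0def
  have hC0 : G.WFT (G.tail ej) (G.tail ej) C0 :=
    G.wft_append hTz (G.conn_spec hG z (G.tail ej))
  have hC0mem : ∀ e : E, e ∈ C0 :=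
    fun e => List.mem_append_left _ (hTmem e (by simp))
  -- the modified covering closed walk
  set C : List E := C0.flatMap (fun e => if e = ej then Z' ++ [ej] else [e]) with hCdef
  have hCw : G.WFT (G.tail ej) (G.tail ej) C := G.wft_flatMap hf C0 _ _ hC0
  have hCmem : ∀ e : E, e ∈ C := by
    intro e
    rw [hCdef]
    refine List.mem_flatMap.2 ⟨e, hC0mem e, ?_⟩
    by_cases he : e = ej
    · subst he
      simp only [if_pos rfl]
      simp
    · simp only [if_neg he]
      simp
  have hCne : C ≠ [] := List.ne_nil_of_mem (hCmem ej)
  obtain ⟨hCs, hCd⟩ : G.src C = some (G.tail ej) ∧ G.dst C = some (G.tail ej) := by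
    rcases hCw.2 with ⟨h, -⟩ | h
    · exact absurd h hCne
    · exact h
  refine ⟨C, ⟨hCw.1, hCne, by rw [hCs, hCd], hCmem⟩, ?_⟩
  rintro ⟨s, hs⟩
  have hn : 0 < C.length := List.length_pos_iff.2 hCne
  have h1 : C[(s + j) % C.length]? = some ej := by
    rw [← hs j hj]
    exact List.getElem?_eq_getElem hj
  obtain ⟨htq, h2⟩ := MultiDigraph.star_claim ej (P.getLast hPne) Z' t ht1 ht hZlast hejZ C0
    ((s + j) % C.length) h1
  have h3 : C[(s + (i-1)) % C.length]? = some eL := by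
    rw [← hs (i-1) (by omega)]
    exact List.getElem?_eq_getElem (by omega)
  have hqlt : (s + j) % C.length < C.length := Nat.mod_lt _ hn
  have hkey : (s + (i-1)) % C.length = (s + j) % C.length - t := by
    have hdm := Nat.div_add_mod (s + j) C.length
    have e1 : s + (i-1) = C.length * ((s+j)/C.length) + ((s+j) % C.length - t) := by omega
    rw [e1, Nat.mul_add_mod, Nat.mod_eq_of_lt (by omega)]
  have hfin : some eL = some (P.getLast hPne) := by
    rw [← h3, hkey, h2]
  exact hPlast (by rw [hlastP, ← Option.some_inj.1 hfin])
end

section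
/- (Weak Extension Property, existence) Let fW be an omnitig in a strongly connected graph G, where f is a join arc and W is a join-free path. Then there exists at least one arc g with tail(g) = head(W) such that there is a path from head(g) to head(f) in G with the arc f removed. -/
section AuxLemmas

open List

variable {V E : Type} {G : MultiDigraph V E}

lemma aux_mem_of_getLast? {l : List E} {a : E} (h : l.getLast? = some a) : a ∈ l := by
  rw [List.getLast?_eq_getElem?] at h
  obtain ⟨h1, h2⟩ := List.getElem?_eq_some_iff.mp h
  exact h2 ▸ List.getElem_mem _

lemma aux_chain {L : List E} (hW : G.IsWalk L) {i : ℕ} (h : i + 1 < L.length) :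
    G.head (L[i]'(by omega)) = G.tail (L[i+1]'h) := by
  have := List.isChain_iff_getElem.mp hW i (by omega)
  simpa using this

lemma aux_src' (L : List E) : G.src L = (L[0]?).map G.tail := by
  unfold MultiDigraph.src; rw [List.head?_eq_getElem?]

lemma aux_dst' (L : List E) : G.dst L = (L[L.length - 1]?).map G.head := by
  unfold MultiDigraph.dst; rw [List.getLast?_eq_getElem?]

lemma aux_src_eq {L : List E} (h : 0 < L.length) :
    G.src L = some (G.tail (L[0]'h)) := by
  rw [aux_src', List.getElem?_eq_getElem h]; rfl

lemma aux_dst_eq {L : List E} (h : 0 < L.length) :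
    G.dst L = some (G.head (L[L.length - 1]'(by omega))) := by
  rw [aux_dst', List.getElem?_eq_getElem (by omega : L.length - 1 < L.length)]; rfl

lemma aux_src_drop {L : List E} {k : ℕ} (h : k < L.length) :
    G.src (L.drop k) = some (G.tail (L[k]'h)) := by
  rw [aux_src', List.getElem?_drop, Nat.add_zero, List.getElem?_eq_getElem h]; rfl

lemma aux_dst_drop {L : List E} {k : ℕ} (h : k < L.length) :
    G.dst (L.drop k) = G.dst L := by
  have h2 : k + ((L.drop k).length - 1) = L.length - 1 := by
    rw [List.length_drop]; omega
  rw [aux_dst', aux_dst', List.getElem?_drop, h2]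

lemma aux_src_append {A B : List E} (h : A ≠ []) : G.src (A ++ B) = G.src A := by
  cases A with
  | nil => exact absurd rfl h
  | cons a as => simp [MultiDigraph.src]

lemma aux_dst_append {A B : List E} (h : B ≠ []) : G.dst (A ++ B) = G.dst B := by
  unfold MultiDigraph.dst
  rw [List.getLast?_append]
  cases hB : B.getLast? with
  | none => rw [List.getLast?_eq_none_iff] at hB; exact absurd hB h
  | some b => rfl

lemma aux_nodes_length {L : List E} (h : L ≠ []) : (G.nodes L).length = L.length + 1 := by
  cases L with
  | nil => exact absurd rfl h
  | cons e T => simp [MultiDigraph.nodes]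

lemma aux_nodes_getElem_zero {L : List E} (h0 : 0 < L.length) (h : 0 < (G.nodes L).length) :
    (G.nodes L)[0] = G.tail (L[0]'h0) := by
  cases L with
  | nil => simp at h0
  | cons e T => simp [MultiDigraph.nodes]

lemma aux_nodes_getElem_succ {L : List E} {k : ℕ} (hk : k < L.length)
    (h : k + 1 < (G.nodes L).length) :
    (G.nodes L)[k+1] = G.head (L[k]'hk) := by
  cases L with
  | nil => simp at hk
  | cons e T =>
    show (G.tail e :: List.map G.head (e :: T))[k+1] = _
    exact List.getElem_map G.head

lemma aux_nodes_tail_form {L : List E} (hW : G.IsWalk L) {k : ℕ} (hk : k < L.length)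
    (h : k < (G.nodes L).length) :
    (G.nodes L)[k] = G.tail (L[k]'hk) := by
  cases k with
  | zero => exact aux_nodes_getElem_zero hk h
  | succ n => rw [aux_nodes_getElem_succ (by omega : n < L.length) h]; exact aux_chain hW hk

lemma aux_dropLast_drop {α : Type*} (l : List α) (k : ℕ) :
    (l.drop k).dropLast = l.dropLast.drop k := by
  apply List.ext_getElem
  · simp [List.length_dropLast, List.length_drop]; omega
  · intro n h1 h2
    rw [List.getElem_dropLast, List.getElem_drop, List.getElem_drop, List.getElem_dropLast]

lemma aux_not_nodup {l : List V} (h : ¬ l.Nodup) :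
    ∃ i j, i < j ∧ j < l.length ∧ l[i]? = l[j]? := by
  rw [List.nodup_iff_injective_get] at h
  unfold Function.Injective at h
  push_neg at h
  obtain ⟨a, b, hab, hne⟩ := h
  rcases Nat.lt_or_ge a.1 b.1 with hlt | hge
  · exact ⟨a.1, b.1, hlt, b.2, by
      rw [List.getElem?_eq_getElem a.2, List.getElem?_eq_getElem b.2]
      simpa [List.get_eq_getElem] using hab⟩
  · have hlt : b.1 < a.1 := by
      rcases Nat.lt_or_ge b.1 a.1 with h' | h'
      · exact h'
      · exact absurd (Fin.ext (by omega)) hne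
    exact ⟨b.1, a.1, hlt, a.2, by
      rw [List.getElem?_eq_getElem b.2, List.getElem?_eq_getElem a.2]
      simpa [List.get_eq_getElem] using hab.symm⟩

end AuxLemmas

section AuxLemmas2

open List

variable {V E : Type} {G : MultiDigraph V E}

lemma aux_getElem_congr {α : Type*} {l : List α} {i j : ℕ} (h : i = j) (hi : i < l.length) :
    l[i]'hi = l[j]'(h ▸ hi) := by subst h; rfl

lemma aux_nodes_head_form {L : List E} {i : ℕ} (h1 : 1 ≤ i) (hi : i ≤ L.length)
    (h : i < (G.nodes L).length) :
    (G.nodes L)[i] = G.head (L[i-1]'(by omega)) := by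
  obtain ⟨m, rfl⟩ : ∃ m, i = m + 1 := ⟨i - 1, by omega⟩
  rw [aux_nodes_getElem_succ (by omega : m < L.length) h]
  apply congrArg
  exact aux_getElem_congr (by omega) _

lemma aux_walk_take {L : List E} (hW : G.IsWalk L) (k : ℕ) : G.IsWalk (L.take k) :=
  List.IsChain.take hW k

lemma aux_walk_drop {L : List E} (hW : G.IsWalk L) (k : ℕ) : G.IsWalk (L.drop k) :=
  List.IsChain.drop hW k

lemma aux_path_drop {P : List E} (hP : G.IsPath P) {k : ℕ} (hk : k < P.length) :
    G.IsPath (P.drop k) := by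
  obtain ⟨hw, h1, h2⟩ := hP
  have hPne : P ≠ [] := by intro h; rw [h] at hk; simp at hk
  have hdne : P.drop k ≠ [] := by
    intro h
    have := (List.length_drop : (P.drop k).length = P.length - k)
    rw [h] at this
    simp at this
    omega
  have hnodes : G.nodes (P.drop k) = (G.nodes P).drop k := by
    apply List.ext_getElem
    · simp only [aux_nodes_length hdne, aux_nodes_length hPne, List.length_drop]
      omega
    · intro n hn1 hn2
      have hlen1 : (G.nodes (P.drop k)).length = (P.length - k) + 1 := by
        rw [aux_nodes_length hdne, List.length_drop]
      have hlen2 : (G.nodes P).length = P.length + 1 := aux_nodes_length hPne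
      rw [List.getElem_drop]
      cases n with
      | zero =>
        rw [aux_nodes_getElem_zero (by simp only [List.length_drop]; omega) hn1]
        rw [aux_nodes_tail_form hw (by omega : k + 0 < P.length) (by omega)]
        apply congrArg
        rw [List.getElem_drop]
      | succ m =>
        have hm : m < (P.drop k).length := by
          simp only [List.length_drop] at hn1 ⊢
          rw [hlen1] at hn1
          omega
        rw [aux_nodes_getElem_succ hm hn1]
        have hkm : k + m < P.length := by simp only [List.length_drop] at hm; omega
        have e2 : (G.nodes P)[k + (m+1)]'(by omega) = G.head (P[k+m]'hkm) := by
          rw [aux_getElem_congr (show k + (m+1) = (k+m) + 1 by omega) _]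
          exact aux_nodes_getElem_succ hkm (by omega)
        rw [e2]
        apply congrArg
        rw [List.getElem_drop]
  refine ⟨aux_walk_drop hw k, ?_, ?_⟩
  · rw [hnodes, aux_dropLast_drop]
    exact h1.sublist (List.drop_sublist _ _)
  · rw [hnodes, List.tail_drop]
    have h3 : List.drop (k+1) (G.nodes P) = List.drop k (G.nodes P).tail := by
      rw [List.drop_tail]
    rw [h3]
    exact h2.sublist (List.drop_sublist _ _)

lemma aux_shorten {L : List E} (hW : G.IsWalk L) (hne : L ≠ []) (hnp : ¬ G.IsPath L) :
    ∃ L', G.IsWalk L' ∧ L' ≠ [] ∧ L'.length < L.length ∧ (∀ e ∈ L', e ∈ L) ∧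
      G.src L' = G.src L ∧ G.dst L' = G.dst L := by
  have hLpos : 0 < L.length := List.length_pos_iff.mpr hne
  have hNlen : (G.nodes L).length = L.length + 1 := aux_nodes_length hne
  have main : ∃ i j, i < j ∧ j ≤ L.length ∧ (1 ≤ i ∨ j < L.length) ∧
      (G.nodes L)[i]? = (G.nodes L)[j]? := by
    unfold MultiDigraph.IsPath at hnp
    rw [not_and_or, not_and_or] at hnp
    rcases hnp with h | h | h
    · exact absurd hW h
    · obtain ⟨i, j, hij, hj, heq⟩ := aux_not_nodup h
      have hjl : j < L.length := by
        rw [List.length_dropLast, hNlen] at hj; omega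
      refine ⟨i, j, hij, by omega, Or.inr hjl, ?_⟩
      rw [List.getElem?_eq_getElem (by omega : i < (G.nodes L).length),
        List.getElem?_eq_getElem (by omega : j < (G.nodes L).length)]
      have e1 : (G.nodes L).dropLast[i]'(by omega) = (G.nodes L)[i]'(by omega) :=
        List.getElem_dropLast _
      have e2 : (G.nodes L).dropLast[j]'hj = (G.nodes L)[j]'(by omega) :=
        List.getElem_dropLast _
      rw [List.getElem?_eq_getElem (by omega : i < (G.nodes L).dropLast.length),
        List.getElem?_eq_getElem hj] at heq
      rw [← e1, ← e2]
      exact heq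
    · obtain ⟨i, j, hij, hj, heq⟩ := aux_not_nodup h
      have hjl : j < L.length := by
        rw [List.length_tail, hNlen] at hj; omega
      refine ⟨i + 1, j + 1, by omega, by omega, Or.inl (by omega), ?_⟩
      rw [List.getElem?_eq_getElem (by omega : i + 1 < (G.nodes L).length),
        List.getElem?_eq_getElem (by omega : j + 1 < (G.nodes L).length)]
      have e1 : (G.nodes L).tail[i]'(by omega) = (G.nodes L)[i+1]'(by omega) :=
        List.getElem_tail _
      have e2 : (G.nodes L).tail[j]'hj = (G.nodes L)[j+1]'(by omega) :=
        List.getElem_tail _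
      rw [List.getElem?_eq_getElem (by omega : i < (G.nodes L).tail.length),
        List.getElem?_eq_getElem hj] at heq
      rw [← e1, ← e2]
      exact heq
  obtain ⟨i, j, hij, hjL, hside, heq⟩ := main
  rw [List.getElem?_eq_getElem (by omega : i < (G.nodes L).length),
    List.getElem?_eq_getElem (by omega : j < (G.nodes L).length)] at heq
  have heq' : (G.nodes L)[i]'(by omega) = (G.nodes L)[j]'(by omega) :=
    Option.some_injective _ heq
  refine ⟨L.take i ++ L.drop j, ?_, ?_, ?_, ?_, ?_, ?_⟩
  · -- walk
    refine List.IsChain.append (aux_walk_take hW i) (aux_walk_drop hW j) ?_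
    intro x hx y hy
    rw [List.getLast?_eq_getElem?] at hx
    rw [List.head?_eq_getElem?, List.getElem?_drop, Nat.add_zero] at hy
    rcases Nat.eq_zero_or_pos i with h0 | hipos
    · rw [h0] at hx; simp at hx
    · have hiL : i < L.length := by omega
      have hjlt : j < L.length := by
        by_contra hcon
        rw [List.getElem?_eq_none_iff.mpr (by omega)] at hy
        simp at hy
      have htl : (L.take i).length = i := by rw [List.length_take]; omega
      rw [htl, List.getElem?_take] at hx
      rw [if_pos (by omega : i - 1 < i),
        List.getElem?_eq_getElem (by omega : i - 1 < L.length)] at hx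
      rw [List.getElem?_eq_getElem hjlt] at hy
      have hx' : x = L[i-1]'(by omega) := (Option.some_injective _ hx).symm
      have hy' : y = L[j]'hjlt := (Option.some_injective _ hy).symm
      rw [hx', hy']
      have c1 : G.head (L[i-1]'(by omega)) = (G.nodes L)[i]'(by omega) :=
        (aux_nodes_head_form (by omega) (by omega) (by omega)).symm
      have c2 : (G.nodes L)[j]'(by omega) = G.tail (L[j]'hjlt) :=
        aux_nodes_tail_form hW hjlt (by omega)
      rw [c1, heq', c2]
  · -- nonempty
    rcases hside with h1 | h1
    · intro hcon
      rw [List.append_eq_nil_iff] at hcon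
      have : 0 < (L.take i).length := by rw [List.length_take]; omega
      rw [hcon.1] at this
      simp at this
    · intro hcon
      rw [List.append_eq_nil_iff] at hcon
      have := List.drop_eq_nil_iff.mp hcon.2
      omega
  · rw [List.length_append, List.length_take, List.length_drop]; omega
  · intro e he
    rcases List.mem_append.mp he with h | h
    · exact List.take_subset _ _ h
    · exact List.drop_subset _ _ h
  · -- src
    rcases Nat.eq_zero_or_pos i with h0 | hipos
    · subst h0
      rw [List.take_zero, List.nil_append]
      have hjlt : j < L.length := by rcases hside with h | h; omega; exact h
      rw [aux_src_drop hjlt, aux_src_eq hLpos]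
      have c2 : (G.nodes L)[j]'(by omega) = G.tail (L[j]'hjlt) :=
        aux_nodes_tail_form hW hjlt (by omega)
      have c0 : (G.nodes L)[0]'(by omega) = G.tail (L[0]'hLpos) :=
        aux_nodes_getElem_zero hLpos (by omega)
      rw [← c2, ← heq', c0]
    · have htpos : 0 < (L.take i).length := by rw [List.length_take]; omega
      have htne : L.take i ≠ [] := List.length_pos_iff.mp htpos
      rw [aux_src_append htne, aux_src_eq htpos, aux_src_eq hLpos]
      apply congrArg
      apply congrArg
      exact List.getElem_take
  · -- dst
    rcases Nat.lt_or_ge j L.length with hjlt | hge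
    · have hdne : L.drop j ≠ [] := by
        intro hcon
        have := List.drop_eq_nil_iff.mp hcon
        omega
      rw [aux_dst_append hdne, aux_dst_drop hjlt]
    · have hjeq : j = L.length := by omega
      have hipos : 1 ≤ i := by
        rcases hside with h | h
        · exact h
        · omega
      rw [hjeq, List.drop_length, List.append_nil]
      have htpos : 0 < (L.take i).length := by rw [List.length_take]; omega
      have htne : L.take i ≠ [] := List.length_pos_iff.mp htpos
      rw [aux_dst_eq htpos, aux_dst_eq hLpos]
      have e1 : (L.take i)[(L.take i).length - 1]'(by omega) = L[i-1]'(by omega) := by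
        rw [aux_getElem_congr (show (L.take i).length - 1 = i - 1 by
          rw [List.length_take]; omega) _]
        exact List.getElem_take
      rw [e1]
      have c1 : G.head (L[i-1]'(by omega)) = (G.nodes L)[i]'(by omega) :=
        (aux_nodes_head_form (by omega) (by omega) (by omega)).symm
      have c2 : (G.nodes L)[j]'(by omega) = G.head (L[L.length - 1]'(by omega)) := by
        rw [aux_nodes_head_form (by omega) (by omega) (by omega)]
        apply congrArg
        exact aux_getElem_congr (by omega) _
      rw [c1, heq', c2]

end AuxLemmas2

section AuxLemmas3

open List

variable {V E : Type} {G : MultiDigraph V E}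

lemma aux_toPath_fuel : ∀ (n : ℕ) (L : List E), L.length ≤ n → G.IsWalk L → L ≠ [] →
    ∃ P, G.IsPath P ∧ P ≠ [] ∧ (∀ e ∈ P, e ∈ L) ∧ G.src P = G.src L ∧ G.dst P = G.dst L := by
  intro n
  induction n with
  | zero =>
    intro L hlen _ hne
    rw [Nat.le_zero, List.length_eq_zero_iff] at hlen
    exact absurd hlen hne
  | succ m IH =>
    intro L hlen hW hne
    by_cases hp : G.IsPath L
    · exact ⟨L, hp, hne, fun _ h => h, rfl, rfl⟩
    · obtain ⟨L', h1, h2, h3, h4, h5, h6⟩ := aux_shorten hW hne hp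
      obtain ⟨P, p1, p2, p3, p4, p5⟩ := IH L' (by omega) h1 h2
      exact ⟨P, p1, p2, fun e he => h4 e (p3 e he), by rw [p4, h5], by rw [p5, h6]⟩

lemma aux_toPath {L : List E} (hW : G.IsWalk L) (hne : L ≠ []) :
    ∃ P, G.IsPath P ∧ P ≠ [] ∧ (∀ e ∈ P, e ∈ L) ∧ G.src P = G.src L ∧ G.dst P = G.dst L :=
  aux_toPath_fuel L.length L le_rfl hW hne

lemma aux_split_last {l : List E} {a : E} (h : a ∈ l) :
    ∃ s t, l = s ++ a :: t ∧ a ∉ t := by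
  induction l with
  | nil => simp at h
  | cons x xs ih =>
    by_cases hx : a ∈ xs
    · obtain ⟨s, t, h1, h2⟩ := ih hx
      exact ⟨x :: s, t, by rw [h1]; rfl, h2⟩
    · have hax : a = x := by
        rcases List.mem_cons.mp h with h' | h'
        · exact h'
        · exact absurd h' hx
      exact ⟨[], xs, by rw [hax]; rfl, hx⟩

lemma aux_sibling [Fintype E] {f : E} (hf : G.JoinArc f) :
    ∃ f', f' ≠ f ∧ G.head f' = G.head f := by
  classical
  unfold MultiDigraph.JoinArc MultiDigraph.inDeg at hf
  rw [Nat.card_eq_fintype_card] at hf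
  obtain ⟨b, hb⟩ := Fintype.exists_ne_of_one_lt_card hf ⟨f, rfl⟩
  exact ⟨b.1, fun h => hb (Subtype.ext h), b.2⟩

end AuxLemmas3

/-- Weak Extension Property, existence: if `fW` is an omnitig with
`f` a join arc and `W` a join-free path, then some arc `g` leaves `head(W)` such
that `head g` reaches `head f` in `G` minus `f`. -/
theorem stmt_6 {V E : Type} [Fintype V] [Fintype E]
    (G : MultiDigraph V E) (hG : G.StronglyConnected)
    (f : E) (W : List E) (hf : G.JoinArc f)
    (hWp : G.IsPath W) (hWj : G.JoinFree W)
    (ho : G.IsOmnitig (f :: W)) :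
    ∃ g : E, G.dst (f :: W) = some (G.tail g) ∧
      G.ReachesAvoid f (G.head g) (G.head f) := by
  classical
  obtain ⟨hA, hforb⟩ := ho
  set ℓ := W.length with hl
  have hAlen : (f :: W).length = ℓ + 1 := by simp [hl]
  set vv := G.head ((f :: W)[ℓ]'(by rw [hAlen]; omega)) with hvv
  have hdstA : G.dst (f :: W) = some vv := by
    rw [aux_dst_eq (L := f :: W) (by rw [hAlen]; omega), hvv]
    apply congrArg
    apply congrArg
    exact aux_getElem_congr (by rw [hAlen]; omega) _
  have hne0 : ∀ i (h : i < ℓ), G.head (W[i]'h) ≠ G.head f := by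
    intro i h hcon
    apply hWj (W[i]'h) (List.getElem_mem _)
    unfold MultiDigraph.JoinArc
    rw [hcon]
    exact hf
  suffices hZ : ∃ Z, G.IsWalk Z ∧ Z ≠ [] ∧ f ∉ Z ∧
      G.src Z = some vv ∧ G.dst Z = some (G.head f) by
    obtain ⟨Z, hZw, hZne, hZf, hZs, hZd⟩ := hZ
    cases Z with
    | nil => exact absurd rfl hZne
    | cons g Z' =>
      refine ⟨g, ?_, ?_⟩
      · rw [hdstA]
        rw [aux_src_eq (L := g :: Z') (by simp)] at hZs
        have : G.tail g = vv := Option.some_injective _ hZs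
        rw [this]
      · cases Z' with
        | nil =>
          left
          rw [aux_dst_eq (L := [g]) (by simp)] at hZd
          exact Option.some_injective _ hZd
        | cons g2 Z'' =>
          right
          have hZ'w : G.IsWalk (g2 :: Z'') := List.IsChain.tail hZw
          have hrel : G.head g = G.tail g2 := by
            have := aux_chain (L := g :: g2 :: Z'') hZw (i := 0) (by simp)
            simpa using this
          obtain ⟨P, hP, hPne, hPsub, hPs, hPd⟩ := aux_toPath hZ'w (by simp)
          refine ⟨P, hP, ?_, ?_, ?_⟩
          · intro hfP
            exact hZf (List.mem_cons_of_mem _ (hPsub f hfP))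
          · rw [hPs, aux_src_eq (L := g2 :: Z'') (by simp), hrel]
            rfl
          · rw [hPd, ← hZd]
            unfold MultiDigraph.dst
            rw [List.getLast?_cons_cons]
  obtain ⟨f', hf'ne, hf'h⟩ := aux_sibling hf
  rcases hG vv (G.tail f') with hveq | ⟨Y, hYw, hYs, hYd⟩
  · refine ⟨[f'], List.isChain_singleton _, by simp, ?_, ?_, ?_⟩
    · intro h
      rw [List.mem_singleton] at h
      exact hf'ne h.symm
    · rw [aux_src_eq (L := [f']) (by simp), hveq]
      rfl
    · rw [aux_dst_eq (L := [f']) (by simp)]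
      exact congrArg some hf'h
  · have hYne : Y ≠ [] := by
      intro hcon; rw [hcon] at hYs; simp [MultiDigraph.src] at hYs
    by_cases hfY : f ∈ Y
    case neg =>
      refine ⟨Y ++ [f'], ?_, by simp, ?_, ?_, ?_⟩
      · refine List.IsChain.append hYw (List.isChain_singleton _) ?_
        intro x hx y hy
        have hy' : y = f' := Eq.symm (by simpa using hy)
        have hx' : G.dst Y = some (G.head x) := by
          unfold MultiDigraph.dst
          rw [Option.mem_def.mp hx]
          rfl
        rw [hYd] at hx'
        rw [hy']
        exact (Option.some_injective _ hx').symm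
      · intro hcon
        rcases List.mem_append.mp hcon with h | h
        · exact hfY h
        · rw [List.mem_singleton] at h; exact hf'ne h.symm
      · rw [aux_src_append hYne, hYs]
      · rw [aux_dst_append (by simp), aux_dst_eq (L := [f']) (by simp)]
        exact congrArg some hf'h
    case pos =>
      obtain ⟨Y₁, Y₂, hYeq, hfY₂⟩ := aux_split_last hfY
      have hY₂w : G.IsWalk Y₂ := by
        apply List.IsChain.suffix hYw
        exact ⟨Y₁ ++ [f], by rw [hYeq]; simp⟩
      have hfY₂w : G.IsWalk (f :: Y₂) := by
        apply List.IsChain.suffix hYw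
        exact ⟨Y₁, by rw [hYeq]⟩
      have hCw : G.IsWalk (Y₂ ++ [f']) := by
        refine List.IsChain.append hY₂w (List.isChain_singleton _) ?_
        intro x hx y hy
        have hy' : y = f' := Eq.symm (by simpa using hy)
        have hgl : Y.getLast? = some x := by
          have h2 : (f :: Y₂).getLast? = some x := by
            cases Y₂ with
            | nil => simp at hx
            | cons a as => rw [List.getLast?_cons_cons]; exact Option.mem_def.mp hx
          rw [hYeq, List.getLast?_append, h2]
          rfl
        have hx' : G.dst Y = some (G.head x) := by
          unfold MultiDigraph.dst; rw [hgl]; rfl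
        rw [hYd] at hx'
        rw [hy']
        exact (Option.some_injective _ hx').symm
      have hCne : (Y₂ ++ [f'] : List E) ≠ [] := by simp
      have hCf : f ∉ Y₂ ++ [f'] := by
        intro hcon
        rcases List.mem_append.mp hcon with h | h
        · exact hfY₂ h
        · rw [List.mem_singleton] at h; exact hf'ne h.symm
      have hCs : G.src (Y₂ ++ [f']) = some (G.head f) := by
        cases Y₂ with
        | nil =>
          rw [List.nil_append, aux_src_eq (L := [f']) (by simp)]
          have hd : G.dst Y = some (G.head f) := by
            rw [hYeq, aux_dst_append (B := f :: []) (by simp),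
              aux_dst_eq (L := f :: []) (by simp)]
            rfl
          rw [hYd] at hd
          exact hd
        | cons a as =>
          rw [aux_src_append (by simp), aux_src_eq (L := a :: as) (by simp)]
          have := aux_chain (L := f :: a :: as) hfY₂w (i := 0) (by simp)
          exact congrArg some (by simpa using this.symm)
      have hCd : G.dst (Y₂ ++ [f']) = some (G.head f) := by
        rw [aux_dst_append (by simp), aux_dst_eq (L := [f']) (by simp)]
        exact congrArg some hf'h
      obtain ⟨P, hPp, hPne, hPsub, hPs, hPd⟩ := aux_toPath hCw hCne
      rw [hCs] at hPs
      rw [hCd] at hPd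
      have hPf : f ∉ P := fun h => hCf (hPsub f h)
      have hPw : G.IsWalk P := hPp.1
      have hPpos : 0 < P.length := List.length_pos_iff.mpr hPne
      set pred : ℕ → Prop :=
        fun k => k ≤ P.length ∧ k ≤ ℓ ∧ ∀ i, i < k → P[i]? = W[i]? with hpreddef
      set k := Nat.findGreatest pred ℓ with hkdef
      have hk : pred k := Nat.findGreatest_spec (Nat.zero_le _)
        ⟨Nat.zero_le _, Nat.zero_le _, fun i h => absurd h (Nat.not_lt_zero i)⟩
      have hkP : k ≤ P.length := hk.1
      have hkℓ : k ≤ ℓ := hk.2.1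
      have hmatch : ∀ i, i < k → P[i]? = W[i]? := hk.2.2
      have hkPlt : k < P.length := by
        by_contra hcon
        have hke : k = P.length := by omega
        have h1 : 1 ≤ k := by omega
        have e1 := hmatch (k - 1) (by omega)
        have hWlen1 : k - 1 < W.length := by omega
        rw [List.getElem?_eq_getElem (by omega : k - 1 < P.length),
          List.getElem?_eq_getElem hWlen1] at e1
        have e1' : P[k-1]'(by omega) = W[k-1]'hWlen1 := Option.some_injective _ e1
        have hd := aux_dst_eq (G := G) (L := P) hPpos
        rw [hPd] at hd
        have hd' : G.head (P[P.length - 1]'(by omega)) = G.head f :=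
          (Option.some_injective _ hd).symm
        rw [aux_getElem_congr (show P.length - 1 = k - 1 by omega) _] at hd'
        apply hne0 (k - 1) hWlen1
        rw [← e1']
        exact hd'
      have htail : G.tail (P[k]'hkPlt) = G.head ((f :: W)[k]'(by rw [hAlen]; omega)) := by
        rcases Nat.eq_zero_or_pos k with h0 | h1
        · have hs := aux_src_eq (G := G) (L := P) hPpos
          rw [hPs] at hs
          have hs' : G.tail (P[0]'hPpos) = G.head f := (Option.some_injective _ hs).symm
          rw [aux_getElem_congr h0 _, aux_getElem_congr h0 _]
          rw [show ((f :: W)[0]'(by rw [hAlen]; omega)) = f from rfl]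
          exact hs'
        · obtain ⟨m, hm⟩ : ∃ m, k = m + 1 := ⟨k - 1, by omega⟩
          rw [aux_getElem_congr hm _, aux_getElem_congr hm _]
          have hc := aux_chain hPw (show m + 1 < P.length by omega)
          rw [← hc]
          have e1 := hmatch m (by omega)
          rw [List.getElem?_eq_getElem (by omega : m < P.length),
            List.getElem?_eq_getElem (by omega : m < W.length)] at e1
          have e1' : P[m]'(by omega) = W[m]'(by omega) := Option.some_injective _ e1
          rw [e1']
          rw [show ((f :: W)[m+1]'(by rw [hAlen]; omega)) = W[m]'(by omega) from
            List.getElem_cons_succ ..]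
      rcases Nat.lt_or_ge k ℓ with hkl | hkg
      · exfalso
        refine hforb 1 (k + 1) le_rfl (by omega) (by rw [hAlen]; omega)
          ⟨P.drop k, aux_path_drop hPp hkPlt, ?_, ?_, ?_, ?_, ?_⟩
        · intro hcon
          have := (List.length_drop : (P.drop k).length = P.length - k)
          rw [hcon] at this
          simp at this
          omega
        · rw [aux_src_drop hkPlt, htail]
          apply congrArg
          rw [aux_chain hA (show k + 1 < (f :: W).length by rw [hAlen]; omega)]
        · rw [aux_dst_drop hkPlt, hPd]
          rfl
        · rw [List.head?_eq_getElem?, List.getElem?_drop, Nat.add_zero,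
            List.getElem?_eq_getElem hkPlt]
          intro hcon
          have hPkW : P[k]'hkPlt = W[k]'(by omega) := by
            have h2 : P[k]'hkPlt = (f :: W)[k+1]'(by rw [hAlen]; omega) :=
              Option.some_injective _ hcon
            rw [h2]
            exact List.getElem_cons_succ ..
          have hpred1 : pred (k + 1) := by
            refine ⟨by omega, by omega, fun i hi => ?_⟩
            rcases Nat.lt_or_ge i k with h' | h'
            · exact hmatch i h'
            · have hik : i = k := by omega
              rw [hik, List.getElem?_eq_getElem hkPlt,
                List.getElem?_eq_getElem (by omega : k < W.length)]
              exact congrArg some hPkW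
          exact Nat.findGreatest_is_greatest (P := pred) (n := ℓ) (by omega) (by omega) hpred1
        · intro hcon
          have hfeq : ((f :: W)[1-1]'(by rw [hAlen]; omega)) = f := rfl
          rw [hfeq] at hcon
          exact hPf (List.drop_subset _ _ (aux_mem_of_getLast? hcon))
      · have hkeq : k = ℓ := le_antisymm hkℓ hkg
        refine ⟨P.drop k, aux_walk_drop hPw k, ?_, ?_, ?_, ?_⟩
        · intro hcon
          have := (List.length_drop : (P.drop k).length = P.length - k)
          rw [hcon] at this
          simp at this
          omega
        · exact fun h => hPf (List.drop_subset _ _ h)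
        · rw [aux_src_drop hkPlt, htail, hvv]
          apply congrArg
          apply congrArg
          exact aux_getElem_congr hkeq _
        · rw [aux_dst_drop hkPlt, hPd]
end

section
/- (Y-intersection Property) Let fWg be an omnitig in a strongly connected graph, where f is a join arc, W is a join-free path (possibly empty), and g is a split arc. Then for any sibling split arc g' of g (i.e., g' ≠ g with tail(g') = tail(g)), the walk fWg' is not an omnitig. -/
namespace MultiDigraphAux

open MultiDigraph List

variable {V E : Type} (G : MultiDigraph V E)

lemma src_cons (a : E) (P : List E) : G.src (a :: P) = some (G.tail a) := rfl

lemma dst_cons (a : E) (P : List E) (h : P ≠ []) : G.dst (a :: P) = G.dst P := by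
  obtain ⟨b, P', rfl⟩ := List.exists_cons_of_ne_nil h
  simp [MultiDigraph.dst, List.getLast?_cons_cons]

lemma dst_singleton (a : E) : G.dst [a] = some (G.head a) := rfl

lemma nodes_cons_cons (a b : E) (P : List E) (h : G.head a = G.tail b) :
    G.nodes (a :: b :: P) = G.tail a :: G.nodes (b :: P) := by
  simp [MultiDigraph.nodes, h]

lemma nodes_cons' (a : E) (P : List E) (hne : P ≠ [])
    (h : ∀ b ∈ P.head?, G.head a = G.tail b) :
    G.nodes (a :: P) = G.tail a :: G.nodes P := by
  obtain ⟨b, P', rfl⟩ := List.exists_cons_of_ne_nil hne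
  exact nodes_cons_cons G a b P' (h b rfl)

lemma nodes_append_singleton (a : E) (P : List E) (hne : P ≠ []) :
    G.nodes (P ++ [a]) = G.nodes P ++ [G.head a] := by
  obtain ⟨b, P', rfl⟩ := List.exists_cons_of_ne_nil hne
  simp [MultiDigraph.nodes]

lemma dst_concat (a : E) (P : List E) : G.dst (P ++ [a]) = some (G.head a) := by
  simp [MultiDigraph.dst, List.getLast?_concat]

lemma nodes_cons_mem (a : E) (P : List E) : G.tail a ∈ G.nodes (a :: P) := by
  simp [MultiDigraph.nodes]

/-- suffix extraction from a walk with nodup nodes -/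
lemma exists_suffix (Q : List E) (hW : G.IsWalk Q) (hnd : (G.nodes Q).Nodup)
    {u v : V} (hu : u ∈ G.nodes Q) (hv : G.dst Q = some v) :
    u = v ∨ ∃ S, G.IsWalk S ∧ S ≠ [] ∧ G.src S = some u ∧ G.dst S = some v ∧
      (G.nodes S).Nodup := by
  induction Q with
  | nil => simp [MultiDigraph.nodes] at hu
  | cons c Q'' ih =>
    by_cases huc : u = G.tail c
    · exact Or.inr ⟨c :: Q'', hW, by simp, by rw [src_cons, huc], hv, hnd⟩
    · have hu' : u ∈ (c :: Q'').map G.head := by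
        simpa [MultiDigraph.nodes, huc] using hu
      cases Q'' with
      | nil =>
        left
        have : u = G.head c := by simpa using hu'
        have : G.dst [c] = some (G.head c) := rfl
        rw [this] at hv
        simp_all
      | cons d Q''' =>
        have hcd : G.head c = G.tail d := by
          have := (List.isChain_cons.mp hW).1 d rfl
          exact this
        have hnodes : G.nodes (c :: d :: Q''') = G.tail c :: G.nodes (d :: Q''') :=
          nodes_cons_cons G c d Q''' hcd
        have hu'' : u ∈ G.nodes (d :: Q''') := by
          have : u ∈ G.nodes (c :: d :: Q''') := hu
          rw [hnodes] at this
          rcases List.mem_cons.mp this with h | h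
          · exact absurd h huc
          · exact h
        have hnd'' : (G.nodes (d :: Q''')).Nodup := by
          rw [hnodes] at hnd; exact hnd.of_cons
        have hW'' : G.IsWalk (d :: Q''') := hW.tail
        have hv'' : G.dst (d :: Q''') = some v := by
          rwa [dst_cons G c (d :: Q''') (by simp)] at hv
        exact ih hW'' hnd'' hu'' hv''

/-- walk reduction to a path with nodup node list -/
lemma exists_nodup_path (P : List E) (hW : G.IsWalk P) (hne : P ≠ []) :
    ∀ u v : V, G.src P = some u → G.dst P = some v →
    u = v ∨ ∃ Q, G.IsWalk Q ∧ Q ≠ [] ∧ G.src Q = some u ∧ G.dst Q = some v ∧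
      (G.nodes Q).Nodup := by
  induction P with
  | nil => exact absurd rfl hne
  | cons a P' ih =>
    intro u v hu hv
    have hu' : u = G.tail a := by
      rw [src_cons] at hu; exact (Option.some_injective _ hu).symm
    cases P' with
    | nil =>
      have hv' : v = G.head a := by
        rw [dst_singleton] at hv; exact (Option.some_injective _ hv).symm
      by_cases huv : u = v
      · exact Or.inl huv
      · refine Or.inr ⟨[a], hW, by simp, by rw [src_cons, hu'], by rw [dst_singleton, hv'], ?_⟩
        rw [hu', hv'] at huv
        simp only [MultiDigraph.nodes, List.map_cons, List.map_nil, List.nodup_cons]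
        exact ⟨by simpa using huv, by simp, by simp⟩
    | cons b P'' =>
      have hab : G.head a = G.tail b := (List.isChain_cons.mp hW).1 b rfl
      have hrec := ih hW.tail (by simp) (G.head a) v (by rw [src_cons, hab])
        (by rwa [dst_cons G a (b :: P'') (by simp)] at hv)
      rcases hrec with hav | ⟨Q, wQ, neQ, sQ, dQ, ndQ⟩
      · by_cases huv : u = v
        · exact Or.inl huv
        · refine Or.inr ⟨[a], List.isChain_singleton a, by simp, by rw [src_cons, hu'],
            by rw [dst_singleton, ← hav], ?_⟩
          simp [MultiDigraph.nodes, hu']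
          intro h; exact huv (by rw [hu', h, hav])
      · by_cases humem : u ∈ G.nodes Q
        · exact exists_suffix G Q wQ ndQ humem dQ
        · obtain ⟨q, Q', rfl⟩ := List.exists_cons_of_ne_nil neQ
          have hq : G.head a = G.tail q := by
            rw [src_cons] at sQ
            exact (Option.some_injective _ sQ).symm
          refine Or.inr ⟨a :: q :: Q', List.isChain_cons.mpr ⟨fun y hy => by
              simp at hy; rw [← hy]; exact hq, wQ⟩, by simp, by rw [src_cons, hu'],
            by rwa [dst_cons G a (q :: Q') (by simp)], ?_⟩
          rw [nodes_cons_cons G a q Q' hq, ← hu']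
          exact List.nodup_cons.mpr ⟨humem, ndQ⟩

/-- dropping the first arc of a path yields a path -/
lemma isPath_tail (a : E) (D : List E) (hne : D ≠ []) (hp : G.IsPath (a :: D)) :
    G.IsPath D := by
  obtain ⟨hW, h1, h2⟩ := hp
  obtain ⟨b, D', rfl⟩ := List.exists_cons_of_ne_nil hne
  have hab : G.head a = G.tail b := (List.isChain_cons.mp hW).1 b rfl
  have hkey : G.nodes (b :: D') = (G.nodes (a :: b :: D')).tail := by
    rw [nodes_cons_cons G a b D' hab, List.tail_cons]
  refine ⟨hW.tail, ?_, ?_⟩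
  · rw [hkey]
    exact (List.dropLast_sublist _).nodup h2
  · rw [hkey]
    exact (List.tail_sublist _).nodup h2

end MultiDigraphAux

open MultiDigraphAux

/-- Y-intersection Property: if `fWg` is an omnitig with `f` a join
arc, `W` a join-free path (possibly empty), `g` a split arc, then for any sibling
split arc `g' ≠ g` of `g`, the walk `fWg'` is not an omnitig. -/
theorem stmt_8 {V E : Type} [Fintype V] [Fintype E]
    (G : MultiDigraph V E) (hG : G.StronglyConnected)
    (f : E) (W : List E) (g : E) (hf : G.JoinArc f) (hg : G.SplitArc g)
    (hWp : G.IsPath W) (hWj : G.JoinFree W)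
    (ho : G.IsOmnitig (f :: (W ++ [g])))
    (g' : E) (hne : g' ≠ g) (ht : G.tail g' = G.tail g) :
    ¬ G.IsOmnitig (f :: (W ++ [g'])) := by
  intro ho'
  classical
  -- another arc `e ≠ f` into `G.head f`
  have hnt : Nontrivial {e : E // G.head e = G.head f} :=
    Finite.one_lt_card_iff_nontrivial.mp hf
  obtain ⟨⟨e, hehead⟩, hnef⟩ := exists_ne (⟨f, rfl⟩ : {e : E // G.head e = G.head f})
  have hef : e ≠ f := fun h => hnef (Subtype.ext h)
  -- a closed path C from `head f` to `head f` whose last arc is `e`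
  have hC : ∃ C, G.IsPath C ∧ C ≠ [] ∧ G.src C = some (G.head f) ∧
      G.dst C = some (G.head f) ∧ C.getLast? = some e := by
    by_cases hte : G.head f = G.tail e
    · refine ⟨[e], ⟨List.isChain_singleton e, by simp [MultiDigraph.nodes],
        by simp [MultiDigraph.nodes]⟩, by simp, ?_, ?_, rfl⟩
      · rw [src_cons, hte]
      · rw [dst_singleton, hehead]
    · rcases hG (G.head f) (G.tail e) with h | ⟨P, wP, sP, dP⟩
      · exact absurd h hte
      · have hPne : P ≠ [] := by
          intro h; rw [h] at sP; simp [MultiDigraph.src] at sP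
        rcases exists_nodup_path G P wP hPne _ _ sP dP with h | ⟨R, wR, neR, sR, dR, ndR⟩
        · exact absurd h hte
        · obtain ⟨r₀, R', rfl⟩ := List.exists_cons_of_ne_nil neR
          have hr₀ : G.tail r₀ = G.head f := by
            rw [src_cons] at sR; exact Option.some_injective _ sR
          obtain ⟨r₁, hr₁, hr₁head⟩ : ∃ r₁, (r₀ :: R').getLast? = some r₁ ∧
              G.head r₁ = G.tail e := by
            rcases Option.map_eq_some_iff.mp dR with ⟨r₁, h1, h2⟩
            exact ⟨r₁, h1, h2⟩
          have hwalk : G.IsWalk ((r₀ :: R') ++ [e]) := by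
            rw [MultiDigraph.IsWalk, List.Chain', List.isChain_append]
            refine ⟨wR, List.isChain_singleton e, fun x hx y hy => ?_⟩
            simp only [List.head?_cons, Option.mem_def, Option.some.injEq] at hy
            rw [hr₁] at hx
            simp only [Option.mem_def, Option.some.injEq] at hx
            rw [← hx, ← hy]; exact hr₁head
          have hnodes : G.nodes ((r₀ :: R') ++ [e]) = G.nodes (r₀ :: R') ++ [G.head f] := by
            rw [nodes_append_singleton G e (r₀ :: R') (by simp), hehead]
          have hnodesR : G.nodes (r₀ :: R') = G.head f :: (r₀ :: R').map G.head := by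
            rw [MultiDigraph.nodes, hr₀]
          refine ⟨(r₀ :: R') ++ [e], ⟨hwalk, ?_, ?_⟩, by simp, ?_, ?_, List.getLast?_concat⟩
          · rw [hnodes, List.dropLast_concat]; exact ndR
          · rw [hnodes, hnodesR]
            simp only [List.cons_append, List.tail_cons]
            rw [hnodesR] at ndR
            have h1 : G.head f ∉ (r₀ :: R').map G.head := (List.nodup_cons.mp ndR).1
            have h2 : ((r₀ :: R').map G.head).Nodup := (List.nodup_cons.mp ndR).2
            rw [List.nodup_append]
            refine ⟨h2, List.nodup_singleton _, fun x hx y hy hxy => ?_⟩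
            subst hxy; simp only [List.mem_singleton] at hy
            subst hy
            exact h1 hx
          · rw [List.cons_append, src_cons, hr₀]
          · rw [dst_concat, hehead]
  obtain ⟨C, pC, neC, sC, dC, lC⟩ := hC
  have lCf : C.getLast? ≠ some f := by rw [lC]; exact fun h => hef (Option.some_injective _ h)
  -- chain facts for the omnitig walk
  have cw : ∀ k (h : k + 1 < (f :: (W ++ [g])).length),
      G.head ((f :: (W ++ [g]))[k]'(by omega)) = G.tail ((f :: (W ++ [g]))[k+1]'h) := by
    intro k h
    have := List.isChain_iff_getElem.mp ho.1 k (by simp at h ⊢; omega)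
    simpa [List.get_eq_getElem] using this
  -- the peeling argument
  have peel : ∀ k, ∀ hk : k < (W ++ [g]).length, ∃ D, G.IsPath D ∧ D ≠ [] ∧
      G.src D = some (G.tail ((W ++ [g])[k]'hk)) ∧ G.dst D = some (G.head f) ∧
      D.getLast? ≠ some f := by
    intro k
    induction k with
    | zero =>
      intro hk
      refine ⟨C, pC, neC, ?_, dC, lCf⟩
      have := cw 0 (by simp)
      simp only [List.getElem_cons_zero, List.getElem_cons_succ] at this
      rw [sC, this]
    | succ k ih =>
      intro hk
      have hkW : k < W.length := by simp at hk; omega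
      obtain ⟨D, pD, neD, sD, dD, lD⟩ := ih (by simp at hk ⊢; omega)
      have hMk : (W ++ [g])[k]'(by simp; omega) = W[k]'hkW := List.getElem_append_left hkW
      have hforb := ho.2 1 (k+1) le_rfl (by omega) (by simp; omega)
      simp only [show (1:ℕ) - 1 = 0 from rfl, List.getElem_cons_zero,
        List.getElem_cons_succ] at hforb
      -- the first arc of D must be (W ++ [g])[k]
      by_cases hhD : D.head? = some ((W ++ [g])[k]'(by simp; omega))
      · obtain ⟨d, D', rfl⟩ := List.exists_cons_of_ne_nil neD
        have hd : d = (W ++ [g])[k]'(by simp; omega) := by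
          simpa using hhD
        have hD'ne : D' ≠ [] := by
          intro h; subst h
          rw [dst_singleton] at dD
          have hdt : G.head d = G.head f := Option.some_injective _ dD
          have hmem : d ∈ W := by rw [hd, hMk]; exact List.getElem_mem hkW
          exact hWj d hmem (by rw [MultiDigraph.JoinArc, hdt]; exact hf)
        obtain ⟨b, D'', rfl⟩ := List.exists_cons_of_ne_nil hD'ne
        have hdb : G.head d = G.tail b := (List.isChain_cons.mp pD.1).1 b rfl
        refine ⟨b :: D'', isPath_tail G d _ (by simp) pD, by simp, ?_, ?_, ?_⟩
        · rw [src_cons, ← hdb, hd]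
          have := cw (k+1) (by simp; omega)
          simp only [List.getElem_cons_succ] at this
          rw [this]
        · rwa [dst_cons G d _ (by simp)] at dD
        · rwa [List.getLast?_cons_cons] at lD
      · exact absurd ⟨D, pD, neD, sD, dD, hhD, lD⟩ hforb
  -- apply peeling at the final position
  have hn : W.length < (W ++ [g]).length := by simp
  obtain ⟨D, pD, neD, sD, dD, lD⟩ := peel W.length hn
  have hMg : (W ++ [g])[W.length]'hn = g := List.getElem_concat_length rfl _
  rw [hMg] at sD
  -- the first arc of D must be g, by the omnitig property of fWg
  have hforb := ho.2 1 (W.length + 1) le_rfl (by omega) (by simp)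
  simp only [show (1:ℕ) - 1 = 0 from rfl, List.getElem_cons_zero,
    List.getElem_cons_succ, List.getElem_concat_length] at hforb
  have hhD : D.head? = some g := by
    by_contra hhD
    exact hforb ⟨D, pD, neD, sD, dD, hhD, lD⟩
  -- D is then a forbidden path for the walk fWg'
  have hforb' := ho'.2 1 (W.length + 1) le_rfl (by omega) (by simp)
  simp only [show (1:ℕ) - 1 = 0 from rfl, List.getElem_cons_zero,
    List.getElem_cons_succ, List.getElem_concat_length] at hforb'
  refine hforb' ⟨D, pD, neD, ?_, dD, ?_, lD⟩
  · rw [ht]; exact sD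
  · rw [hhD]; intro h
    exact hne (Option.some_injective _ h).symm
end

section
/- (X-intersection Property, part i) Let v be a bivalent node of a strongly connected graph, let f_1 ≠ f_2 be join arcs with head(f_1) = head(f_2) = v, and g_1 ≠ g_2 split arcs with tail(g_1) = tail(g_2) = v. If both f_1 g_1 and f_2 g_2 are omnitigs, then the in-degree and out-degree of v both equal 2. -/
namespace MultiDigraph

variable {V E : Type} (G : MultiDigraph V E)

section Aux
variable {V E : Type} {G : MultiDigraph V E}

lemma aux_nodes_cons (e : E) (W : List E) :
    G.nodes (e :: W) = G.tail e :: (e :: W).map G.head := rfl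

lemma aux_nodes_ne_nil {W : List E} (h : W ≠ []) : G.nodes W ≠ [] := by
  cases W with
  | nil => exact absurd rfl h
  | cons e W => simp [MultiDigraph.nodes]

lemma aux_src_cons (e : E) (W : List E) : G.src (e :: W) = some (G.tail e) := rfl

lemma aux_nodes_append_single {W : List E} (h : W ≠ []) (e : E) :
    G.nodes (W ++ [e]) = G.nodes W ++ [G.head e] := by
  cases W with
  | nil => exact absurd rfl h
  | cons a W => simp [MultiDigraph.nodes]

lemma aux_dst_append_single (W : List E) (e : E) :
    G.dst (W ++ [e]) = some (G.head e) := by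
  simp [MultiDigraph.dst]

lemma aux_dst_eq {W : List E} (h : W ≠ []) :
    G.dst W = some (G.head (W.getLast h)) := by
  simp [MultiDigraph.dst, List.getLast?_eq_getLast h]

lemma aux_src_eq {W : List E} (h : W ≠ []) :
    G.src W = some (G.tail (W.head h)) := by
  simp [MultiDigraph.src, List.head?_eq_head h]

lemma aux_nodes_getLast? {W : List E} (h : W ≠ []) :
    (G.nodes W).getLast? = some (G.head (W.getLast h)) := by
  cases W with
  | nil => exact absurd rfl h
  | cons a W =>
    have h1 : G.nodes (a :: W) = [G.tail a] ++ (a :: W).map G.head := rfl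
    rw [h1, List.getLast?_append]
    rw [List.getLast?_eq_getLast (by simp), List.getLast_map]
    rfl

lemma aux_nodes_head {W : List E} (h : W ≠ []) :
    (G.nodes W).head (aux_nodes_ne_nil h) = G.tail (W.head h) := by
  cases W with
  | nil => exact absurd rfl h
  | cons a W => rfl

lemma aux_nodes_take {W : List E} {m : ℕ} (hm : 0 < m) :
    G.nodes (W.take m) = (G.nodes W).take (m + 1) := by
  cases W with
  | nil => simp [MultiDigraph.nodes]
  | cons a W =>
    obtain ⟨m, rfl⟩ := Nat.exists_eq_add_of_lt hm
    simp [MultiDigraph.nodes, List.take_cons, List.map_take]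

/-- Any nonempty walk can be shortened to a path with no repeated nodes
(unless the endpoints coincide). -/
lemma aux_exists_path (W : List E) (hW : G.IsWalk W) (u v : V)
    (hs : G.src W = some u) (hd : G.dst W = some v) :
    u = v ∨ ∃ P, G.IsWalk P ∧ P ≠ [] ∧ G.src P = some u ∧ G.dst P = some v ∧
      (G.nodes P).Nodup := by
  induction W using List.reverseRecOn generalizing v with
  | nil => simp [MultiDigraph.src] at hs
  | append_singleton W e ih =>
    have hv : v = G.head e := by
      rw [aux_dst_append_single] at hd; exact (Option.some_inj.mp hd).symm
    subst hv
    by_cases hW0 : W = []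
    · subst hW0
      rw [List.nil_append] at hs
      have hu : u = G.tail e := by
        rw [aux_src_cons] at hs; exact (Option.some_inj.mp hs).symm
      subst hu
      by_cases huv : G.tail e = G.head e
      · exact Or.inl huv
      · refine Or.inr ⟨[e], ?_, by simp, rfl, rfl, ?_⟩
        · simp [MultiDigraph.IsWalk, List.Chain']
        · simp [MultiDigraph.nodes, huv]
    · -- W nonempty
      have hWw : G.IsWalk W := (List.isChain_append.mp hW).1
      have hjunc : G.head (W.getLast hW0) = G.tail e := by
        have := (List.isChain_append.mp hW).2.2
        exact this _ (by simp [List.getLast?_eq_getLast hW0]) e (by simp)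
      have hsW : G.src W = some u := by
        rw [aux_src_eq hW0]
        rw [aux_src_eq (by simp : W ++ [e] ≠ [])] at hs
        rw [← hs]
        congr 1
        exact congrArg G.tail (List.head_append_of_ne_nil hW0).symm
      have hdW : G.dst W = some (G.tail e) := by
        rw [aux_dst_eq hW0, hjunc]
      rcases ih hWw (G.tail e) hsW hdW with huw | ⟨P, hPw, hPne, hPs, hPd, hPnd⟩
      · -- u = tail e
        by_cases huv : u = G.head e
        · exact Or.inl huv
        · refine Or.inr ⟨[e], by simp [MultiDigraph.IsWalk, List.Chain'], by simp, ?_, rfl, ?_⟩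
          · simp [aux_src_cons, huw]
          · simp [MultiDigraph.nodes]
            intro h; exact huv (huw.trans h)
      · by_cases huv : u = G.head e
        · exact Or.inl huv
        by_cases hmem : G.head e ∈ G.nodes P
        · -- truncate P
          have hPhead : (G.nodes P).head (aux_nodes_ne_nil hPne) = u := by
            rw [aux_nodes_head hPne]
            rw [aux_src_eq hPne] at hPs
            exact Option.some_inj.mp hPs
          have hne' : G.head e ≠ u := fun h => huv h.symm
          -- head e occurs among the heads of arcs of P
          have hmem' : G.head e ∈ P.map G.head := by
            cases hP : P with
            | nil => exact absurd hP hPne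
            | cons a Q =>
              subst hP
              rw [aux_nodes_cons] at hmem
              rcases List.mem_cons.mp hmem with h | h
              · exfalso; apply hne'; rw [h, ← hPhead]; rfl
              · exact h
          obtain ⟨k, hk, hkv⟩ := List.mem_iff_getElem.mp hmem'
          rw [List.length_map] at hk
          rw [List.getElem_map] at hkv
          refine Or.inr ⟨P.take (k+1), ?_, ?_, ?_, ?_, ?_⟩
          · exact List.IsChain.prefix hPw (List.take_prefix _ _)
          · have : (P.take (k+1)).length = k+1 := by
              rw [List.length_take]; omega
            intro h; rw [h] at this; simp at this
          · simp only [MultiDigraph.src] at hPs ⊢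
            rw [List.head?_eq_getElem?, List.getElem?_take]
            simp only [Nat.zero_lt_succ, if_true]
            rw [← List.head?_eq_getElem?]
            exact hPs
          · have hlen : (P.take (k+1)).length = k+1 := by
              rw [List.length_take]; omega
            simp only [MultiDigraph.dst]
            rw [List.getLast?_eq_getElem?, hlen]
            simp only [Nat.add_sub_cancel]
            rw [List.getElem?_take]
            simp only [Nat.lt_succ_self, if_true]
            rw [List.getElem?_eq_getElem hk, Option.map_some]
            rw [hkv]
          · rw [aux_nodes_take (Nat.succ_pos k)]
            exact (List.take_sublist _ _).nodup hPnd
        · -- extend P by e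
          refine Or.inr ⟨P ++ [e], ?_, by simp, ?_, aux_dst_append_single _ _, ?_⟩
          · show List.IsChain _ (P ++ [e])
            rw [List.isChain_append]
            refine ⟨hPw, by simp [List.isChain_singleton], ?_⟩
            intro x hx y hy
            simp at hy; subst hy
            rw [List.getLast?_eq_getLast hPne] at hx
            simp at hx; subst hx
            rw [aux_dst_eq hPne] at hPd
            exact Option.some_inj.mp hPd
          · rw [aux_src_eq (by simp : P ++ [e] ≠ [])]
            rw [aux_src_eq hPne] at hPs
            rw [← hPs]
            congr 2
            exact List.head_append_of_ne_nil hPne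
          · rw [aux_nodes_append_single hPne]
            rw [List.nodup_append]
            exact ⟨hPnd, List.nodup_singleton _, by
              intro x hx y hy hxy; simp at hy; rw [hxy, hy] at hx; exact hmem hx⟩

end Aux
section Aux2
variable {V E : Type} {G : MultiDigraph V E}

lemma aux_card_le_two {α : Type} [Finite α] {p : α → Prop} (a b : α)
    (h : ∀ x, p x → x = a ∨ x = b) : Nat.card {x // p x} ≤ 2 := by
  classical
  have hinj : Function.Injective
      (fun x : {x // p x} => (if x.1 = a then 0 else 1 : Fin 2)) := by
    intro x y hxy
    have hx := h x.1 x.2; have hy := h y.1 y.2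
    apply Subtype.ext
    by_cases hxa : x.1 = a <;> by_cases hya : y.1 = a
    · rw [hxa, hya]
    · simp [hxa, hya] at hxy
    · simp [hxa, hya] at hxy
    · rw [hx.resolve_left hxa, hy.resolve_left hya]
  calc Nat.card {x // p x} ≤ Nat.card (Fin 2) := Nat.card_le_card_of_injective _ hinj
    _ = 2 := by simp

lemma aux_no_closed {v : V} {f₁ f₂ g₁ g₂ : E}
    (hf₁ : G.head f₁ = v) (hf₂ : G.head f₂ = v)
    (hg₁ : G.tail g₁ = v) (hg₂ : G.tail g₂ = v)
    (h₁ : G.IsOmnitig [f₁, g₁]) (h₂ : G.IsOmnitig [f₂, g₂])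
    {P : List E} (hP : G.IsPath P) (hne : P ≠ [])
    (hs : G.src P = some v) (hd : G.dst P = some v)
    {a b : E} (ha : P.head? = some a) (hb : P.getLast? = some b)
    (hc : (a ≠ g₁ ∧ b ≠ f₁) ∨ (a ≠ g₂ ∧ b ≠ f₂)) : False := by
  rcases hc with ⟨hag, hbf⟩ | ⟨hag, hbf⟩
  · exact h₁.2 1 1 le_rfl le_rfl (by norm_num)
      ⟨P, hP, hne,
        by show G.src P = some (G.tail g₁); rw [hg₁]; exact hs,
        by show G.dst P = some (G.head f₁); rw [hf₁]; exact hd,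
        by show P.head? ≠ some g₁; rw [ha]; exact fun h => hag (Option.some_inj.mp h),
        by show P.getLast? ≠ some f₁; rw [hb]; exact fun h => hbf (Option.some_inj.mp h)⟩
  · exact h₂.2 1 1 le_rfl le_rfl (by norm_num)
      ⟨P, hP, hne,
        by show G.src P = some (G.tail g₂); rw [hg₂]; exact hs,
        by show G.dst P = some (G.head f₂); rw [hf₂]; exact hd,
        by show P.head? ≠ some g₂; rw [ha]; exact fun h => hag (Option.some_inj.mp h),
        by show P.getLast? ≠ some f₂; rw [hb]; exact fun h => hbf (Option.some_inj.mp h)⟩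

/-- Given a path `Q` with distinct nodes from `v` to `tail f₃`, the walk `Q ++ [f₃]`
is a closed path at `v`. -/
lemma aux_extend_right {v : V} {f₃ : E} (hh3 : G.head f₃ = v)
    {Q : List E} (hQw : G.IsWalk Q) (hQne : Q ≠ [])
    (hQs : G.src Q = some v) (hQd : G.dst Q = some (G.tail f₃))
    (hQnd : (G.nodes Q).Nodup) :
    G.IsPath (Q ++ [f₃]) ∧ G.src (Q ++ [f₃]) = some v ∧
      G.dst (Q ++ [f₃]) = some v ∧ (Q ++ [f₃]).head? = some (Q.head hQne) ∧
      (Q ++ [f₃]).getLast? = some f₃ := by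
  have hnodes : G.nodes (Q ++ [f₃]) = G.nodes Q ++ [v] := by
    rw [aux_nodes_append_single hQne, hh3]
  have hheadv : (G.nodes Q).head (aux_nodes_ne_nil hQne) = v := by
    rw [aux_nodes_head hQne]
    rw [aux_src_eq hQne] at hQs
    exact Option.some_inj.mp hQs
  have hconsQ : G.nodes Q = v :: (G.nodes Q).tail := by
    conv_lhs => rw [← List.cons_head_tail (aux_nodes_ne_nil hQne)]
    rw [hheadv]
  refine ⟨⟨?_, ?_, ?_⟩, ?_, ?_, ?_, List.getLast?_concat⟩
  · show List.IsChain _ (Q ++ [f₃])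
    rw [List.isChain_append]
    refine ⟨hQw, List.isChain_singleton _, ?_⟩
    intro x hx y hy
    simp at hy; subst hy
    rw [List.getLast?_eq_getLast hQne] at hx
    simp at hx; subst hx
    rw [aux_dst_eq hQne] at hQd
    exact Option.some_inj.mp hQd
  · rw [hnodes, List.dropLast_concat]
    exact hQnd
  · rw [hnodes]
    have : (G.nodes Q ++ [v]).tail = (G.nodes Q).tail ++ [v] := by
      conv_lhs => rw [hconsQ]
      rfl
    rw [this, List.nodup_append]
    refine ⟨(List.tail_sublist _).nodup hQnd, List.nodup_singleton _, ?_⟩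
    intro x hx y hy hxy
    simp at hy; rw [hxy, hy] at hx
    have := hconsQ ▸ hQnd
    exact (List.nodup_cons.mp this).1 hx
  · rw [aux_src_eq (by simp : Q ++ [f₃] ≠ [])]
    rw [aux_src_eq hQne] at hQs
    rw [← hQs]
    congr 2
    exact List.head_append_of_ne_nil hQne
  · rw [aux_dst_append_single, hh3]
  · rw [List.head?_eq_head (by simp : Q ++ [f₃] ≠ [])]
    congr 1
    exact List.head_append_of_ne_nil hQne

/-- Given a path `Q` with distinct nodes from `head g₃` to `v`, the walk `g₃ :: Q`
is a closed path at `v`. -/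
lemma aux_extend_left {v : V} {g₃ : E} (ht3 : G.tail g₃ = v)
    {Q : List E} (hQw : G.IsWalk Q) (hQne : Q ≠ [])
    (hQs : G.src Q = some (G.head g₃)) (hQd : G.dst Q = some v)
    (hQnd : (G.nodes Q).Nodup) :
    G.IsPath (g₃ :: Q) ∧ G.src (g₃ :: Q) = some v ∧
      G.dst (g₃ :: Q) = some v ∧ (g₃ :: Q).head? = some g₃ ∧
      (g₃ :: Q).getLast? = some (Q.getLast hQne) := by
  have hQhead : G.tail (Q.head hQne) = G.head g₃ := by
    rw [aux_src_eq hQne] at hQs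
    exact Option.some_inj.mp hQs
  have hnodes : G.nodes (g₃ :: Q) = v :: G.nodes Q := by
    cases Q with
    | nil => exact absurd rfl hQne
    | cons q Q' =>
      have : G.tail q = G.head g₃ := hQhead
      simp [MultiDigraph.nodes, ht3, this]
  have hlastv : (G.nodes Q).getLast? = some v := by
    rw [aux_nodes_getLast? hQne]
    rw [aux_dst_eq hQne] at hQd
    exact hQd
  have hvnotdrop : v ∉ (G.nodes Q).dropLast := by
    intro hmem
    have hsplit : (G.nodes Q).dropLast ++ [(G.nodes Q).getLast (aux_nodes_ne_nil hQne)]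
        = G.nodes Q := List.dropLast_append_getLast _
    have hgl : (G.nodes Q).getLast (aux_nodes_ne_nil hQne) = v := by
      rw [List.getLast?_eq_getLast (aux_nodes_ne_nil hQne)] at hlastv
      exact Option.some_inj.mp hlastv
    have := hsplit ▸ hQnd
    rw [List.nodup_append] at this
    exact this.2.2 v hmem v (by simp [hgl]) rfl
  refine ⟨⟨?_, ?_, ?_⟩, ?_, ?_, rfl, ?_⟩
  · show List.IsChain _ (g₃ :: Q)
    rw [List.isChain_cons]
    refine ⟨?_, hQw⟩
    intro y hy
    rw [List.head?_eq_head hQne] at hy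
    simp at hy; subst hy
    exact hQhead.symm
  · rw [hnodes, List.dropLast_cons_of_ne_nil (aux_nodes_ne_nil hQne), List.nodup_cons]
    exact ⟨hvnotdrop, (List.dropLast_sublist _).nodup hQnd⟩
  · rw [hnodes]
    exact hQnd
  · rw [aux_src_cons, ht3]
  · rw [MultiDigraph.dst, List.getLast?_eq_getLast (by simp : g₃ :: Q ≠ []),
      List.getLast_cons hQne, ← List.getLast?_eq_getLast hQne]
    exact hQd
  · rw [List.getLast?_eq_getLast (by simp : g₃ :: Q ≠ []), List.getLast_cons hQne]

end Aux2
end MultiDigraph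

open MultiDigraph in
/-- X-intersection Property, part i. -/
theorem stmt_9 {V E : Type} [Fintype V] [Fintype E]
    (G : MultiDigraph V E) (hG : G.StronglyConnected)
    (v : V) (hv : G.Bivalent v)
    (f₁ f₂ g₁ g₂ : E) (hff : f₁ ≠ f₂) (hgg : g₁ ≠ g₂)
    (hf₁ : G.head f₁ = v) (hf₂ : G.head f₂ = v)
    (hg₁ : G.tail g₁ = v) (hg₂ : G.tail g₂ = v)
    (hjf₁ : G.JoinArc f₁) (hjf₂ : G.JoinArc f₂)
    (hsg₁ : G.SplitArc g₁) (hsg₂ : G.SplitArc g₂)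
    (h₁ : G.IsOmnitig [f₁, g₁]) (h₂ : G.IsOmnitig [f₂, g₂]) :
    G.inDeg v = 2 ∧ G.outDeg v = 2 := by
  classical
  obtain ⟨hvin, hvout⟩ := hv
  constructor
  · -- in-degree
    have hle : G.inDeg v ≤ 2 := by
      by_contra hlt
      have h3 : ∃ f₃, G.head f₃ = v ∧ f₃ ≠ f₁ ∧ f₃ ≠ f₂ := by
        by_contra hno
        push_neg at hno
        exact hlt (aux_card_le_two f₁ f₂ (fun x hx => by
          by_cases h : x = f₁
          · exact Or.inl h
          · exact Or.inr (hno x hx h)))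
      obtain ⟨f₃, hh3, h31, h32⟩ := h3
      by_cases ht : G.tail f₃ = v
      · -- self-loop
        refine aux_no_closed hf₁ hf₂ hg₁ hg₂ h₁ h₂ (P := [f₃])
          ⟨by simp [MultiDigraph.IsWalk, List.Chain'], by simp [MultiDigraph.nodes],
            by simp [MultiDigraph.nodes]⟩ (by simp)
          (by rw [aux_src_cons, ht]) (by simp [MultiDigraph.dst, hh3]) rfl rfl ?_
        by_cases hcase : f₃ = g₁
        · exact Or.inr ⟨fun h => hgg (hcase ▸ h), h32⟩
        · exact Or.inl ⟨hcase, h31⟩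
      · -- find a path from v to tail f₃
        rcases hG v (G.tail f₃) with heq | ⟨W, hWw, hWs, hWd⟩
        · exact ht heq.symm
        rcases aux_exists_path W hWw v (G.tail f₃) hWs hWd with heq | ⟨Q, hQw, hQne, hQs, hQd, hQnd⟩
        · exact ht heq.symm
        obtain ⟨hP, hPs, hPd, hPh, hPl⟩ := aux_extend_right hh3 hQw hQne hQs hQd hQnd
        have hta : G.tail (Q.head hQne) = v := by
          rw [aux_src_eq hQne] at hQs
          exact Option.some_inj.mp hQs
        refine aux_no_closed hf₁ hf₂ hg₁ hg₂ h₁ h₂ hP (by simp) hPs hPd hPh hPl ?_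
        by_cases hcase : Q.head hQne = g₁
        · exact Or.inr ⟨fun h => hgg (hcase ▸ h), h32⟩
        · exact Or.inl ⟨hcase, h31⟩
    omega
  · -- out-degree
    have hle : G.outDeg v ≤ 2 := by
      by_contra hlt
      have h3 : ∃ g₃, G.tail g₃ = v ∧ g₃ ≠ g₁ ∧ g₃ ≠ g₂ := by
        by_contra hno
        push_neg at hno
        exact hlt (aux_card_le_two g₁ g₂ (fun x hx => by
          by_cases h : x = g₁
          · exact Or.inl h
          · exact Or.inr (hno x hx h)))
      obtain ⟨g₃, ht3, h31, h32⟩ := h3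
      by_cases hh : G.head g₃ = v
      · refine aux_no_closed hf₁ hf₂ hg₁ hg₂ h₁ h₂ (P := [g₃])
          ⟨by simp [MultiDigraph.IsWalk, List.Chain'], by simp [MultiDigraph.nodes],
            by simp [MultiDigraph.nodes]⟩ (by simp)
          (by rw [aux_src_cons, ht3]) (by simp [MultiDigraph.dst, hh]) rfl rfl ?_
        by_cases hcase : g₃ = f₁
        · exact Or.inr ⟨h32, fun h => hff (hcase ▸ h)⟩
        · exact Or.inl ⟨h31, hcase⟩
      · rcases hG (G.head g₃) v with heq | ⟨W, hWw, hWs, hWd⟩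
        · exact hh heq
        rcases aux_exists_path W hWw (G.head g₃) v hWs hWd with heq | ⟨Q, hQw, hQne, hQs, hQd, hQnd⟩
        · exact hh heq
        obtain ⟨hP, hPs, hPd, hPh, hPl⟩ := aux_extend_left ht3 hQw hQne hQs hQd hQnd
        have hhb : G.head (Q.getLast hQne) = v := by
          rw [aux_dst_eq hQne] at hQd
          exact Option.some_inj.mp hQd
        refine aux_no_closed hf₁ hf₂ hg₁ hg₂ h₁ h₂ hP (by simp) hPs hPd hPh hPl ?_
        by_cases hcase : Q.getLast hQne = f₁
        · exact Or.inr ⟨h32, fun h => hff (hcase ▸ h)⟩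
        · exact Or.inl ⟨h31, hcase⟩
    omega
end

section
/- (X-intersection Property, part ii) Let v be a bivalent node, f_1 a join arc with head v and g_1 a split arc with tail v such that f_1 g_1 is an omnitig. Then there is no omnitig f_1 g' with g' ≠ g_1, tail(g') = v, and no omnitig f' g_1 with f' ≠ f_1, head(f') = v. -/
namespace MultiDigraph

variable {V E : Type} (G : MultiDigraph V E)

lemma nodes_cons_eq (a : E) (W : List E) :
    G.nodes (a :: W) = G.tail a :: (a :: W).map G.head := rfl

lemma src_cons (a : E) (W : List E) : G.src (a :: W) = some (G.tail a) := rfl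

lemma dst_cons_cons (a b : E) (W : List E) :
    G.dst (a :: b :: W) = G.dst (b :: W) := by
  simp [dst]

lemma nodes_cons_of_chain {a b : E} {W : List E} (h : G.head a = G.tail b) :
    G.nodes (a :: b :: W) = G.tail a :: G.nodes (b :: W) := by
  simp [nodes, h]

lemma nodes_concat (a : E) (W : List E) (hW : W ≠ []) :
    G.nodes (W ++ [a]) = G.nodes W ++ [G.head a] := by
  cases W with
  | nil => simp at hW
  | cons b l => simp [nodes]

lemma nodes_getLast?_eq_dst {W : List E} (h : W ≠ []) :
    (G.nodes W).getLast? = G.dst W := by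
  cases W with
  | nil => simp at h
  | cons a l =>
    rw [nodes_cons_eq, dst, List.map_cons, List.getLast?_cons_cons,
      ← List.map_cons, ← List.getLast?_map]

/-- Suffix extraction from a simple walk. -/
lemma suffix_extract {u w : V} :
    ∀ P : List E, G.IsWalk P → (G.nodes P).Nodup → u ∈ G.nodes P →
    G.dst P = some w → u ≠ w →
    ∃ Q, G.IsWalk Q ∧ (G.nodes Q).Nodup ∧ G.src Q = some u ∧ G.dst Q = some w := by
  intro P
  induction P with
  | nil => intro _ _ hu _ _; simp [nodes] at hu
  | cons a P' ih =>
    intro hw hnd hu hd hne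
    cases P' with
    | nil =>
      simp [nodes, dst] at hu hd
      rcases hu with hu | hu
      · exact ⟨[a], List.isChain_singleton a,
          by simp [nodes, hd]; exact fun hc => hne (hu.trans hc),
          by simp [src, hu], by simp [dst, hd]⟩
      · exact absurd (hu.trans hd) hne
    | cons b P'' =>
      have hab : G.head a = G.tail b := (List.isChain_cons_cons.mp hw).1
      rw [nodes_cons_of_chain G hab] at hnd hu
      rcases List.mem_cons.mp hu with hu | hu
      · exact ⟨a :: b :: P'', hw, by rw [nodes_cons_of_chain G hab]; exact hnd,
          by simp [src, hu], hd⟩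
      · have := ih (List.isChain_cons_cons.mp hw).2 hnd.of_cons hu
          (by rw [← dst_cons_cons G a b P'']; exact hd) hne
        exact this

/-- Walk-to-simple-path extraction between distinct endpoints. -/
lemma walk_extract {u w : V} :
    ∀ W : List E, G.IsWalk W → G.src W = some u → G.dst W = some w → u ≠ w →
    ∃ P, G.IsWalk P ∧ (G.nodes P).Nodup ∧ G.src P = some u ∧ G.dst P = some w := by
  intro W
  induction W generalizing u with
  | nil => intro _ hs; simp [src] at hs
  | cons e W' ih =>
    intro hw hs hd hne
    have hu : u = G.tail e := by simpa [src] using hs.symm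
    cases W' with
    | nil =>
      have hwd : G.head e = w := by simpa [dst] using hd
      exact ⟨[e], List.isChain_singleton e,
        by simp [nodes, hwd]; exact fun hc => hne (hu.trans hc),
        by simp [src, hu], by simp [dst, hwd]⟩
    | cons b W'' =>
      by_cases hew : G.head e = w
      · exact ⟨[e], List.isChain_singleton e,
          by simp [nodes, hew]; exact fun hc => hne (hu.trans hc),
          by simp [src, hu], by simp [dst, hew]⟩
      · have hab : G.head e = G.tail b := (List.isChain_cons_cons.mp hw).1
        obtain ⟨P', hP'w, hP'nd, hP's, hP'd⟩ := ih (u := G.head e)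
          (List.isChain_cons_cons.mp hw).2 (by simp [src, hab])
          (by rw [← dst_cons_cons G e b W'']; exact hd) hew
        by_cases hmem : u ∈ G.nodes P'
        · exact G.suffix_extract P' hP'w hP'nd hmem hP'd hne
        · cases P' with
          | nil => simp [src] at hP's
          | cons c P'' =>
            have hec : G.head e = G.tail c := by simpa [src] using hP's.symm
            refine ⟨e :: c :: P'', List.isChain_cons_cons.mpr ⟨hec, hP'w⟩, ?_, by simp [src, hu], ?_⟩
            · rw [nodes_cons_of_chain G hec]
              exact List.nodup_cons.mpr ⟨hu ▸ hmem, hP'nd⟩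
            · rw [dst_cons_cons]; exact hP'd

end MultiDigraph
namespace MultiDigraph

variable {V E : Type} (G : MultiDigraph V E)

lemma getLast_not_mem_dropLast {α : Type} {l : List α} (h : l ≠ []) (hnd : l.Nodup) :
    l.getLast h ∉ l.dropLast := by
  have h2 := List.dropLast_append_getLast h
  rw [← h2] at hnd
  have hdj := List.disjoint_of_nodup_append hnd
  exact fun hm => (hdj hm) (by simp)

lemma isPath_of_nodup {P : List E} (hw : G.IsWalk P) (hnd : (G.nodes P).Nodup) :
    G.IsPath P :=
  ⟨hw, hnd.sublist (List.dropLast_sublist _), hnd.sublist (List.tail_sublist _)⟩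

/-- a closed path at `v` whose last arc is `e`. -/
lemma closed_with_last (hG : G.StronglyConnected) {v : V} (e : E) (he : G.head e = v) :
    ∃ P, G.IsPath P ∧ P ≠ [] ∧ G.src P = some v ∧ G.dst P = some v ∧
      P.getLast? = some e := by
  by_cases htev : G.tail e = v
  · refine ⟨[e], ⟨List.isChain_singleton e, ?_, ?_⟩, by simp, by simp [src, htev],
      by simp [dst, he], by simp⟩
    · simp [nodes]
    · simp [nodes]
  · rcases hG v (G.tail e) with heq | ⟨W, hWw, hWs, hWd⟩
    · exact absurd heq.symm htev
    · obtain ⟨P', hP'w, hP'nd, hP's, hP'd⟩ :=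
        G.walk_extract W hWw hWs hWd (fun hc => htev hc.symm)
      cases P' with
      | nil => simp [src] at hP's
      | cons c rest =>
        have hcv : G.tail c = v := by simpa [src] using hP's
        have hglast : ((c :: rest) ++ [e]).getLast? = some e :=
          List.getLast?_concat
        have hnodes : G.nodes ((c :: rest) ++ [e]) =
            G.nodes (c :: rest) ++ [v] := by
          rw [G.nodes_concat e _ (by simp), he]
        have hM : G.nodes (c :: rest) = v :: (c :: rest).map G.head := by
          rw [nodes_cons_eq, hcv]
        refine ⟨(c :: rest) ++ [e], ⟨?_, ?_, ?_⟩, by simp, ?_, ?_, hglast⟩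
        · refine List.IsChain.append hP'w (List.isChain_singleton e) ?_
          intro x hx y hy
          simp at hy
          subst hy
          have h3 : ((c :: rest).getLast?).map G.head = some (G.tail e) := hP'd
          rw [hx] at h3
          simpa using h3
        · rw [hnodes, List.dropLast_concat]
          exact hP'nd
        · rw [hnodes, hM, List.cons_append, List.tail_cons]
          rw [hM, List.nodup_cons] at hP'nd
          refine List.nodup_append'.mpr ⟨hP'nd.2, List.nodup_singleton v, ?_⟩
          intro a ha hb
          simp at hb
          subst hb
          exact hP'nd.1 ha
        · rw [List.cons_append]
          simp [src, hcv]
        · rw [dst, hglast]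
          simp [he]

/-- a closed path at `v` whose first arc is `e`. -/
lemma closed_with_first (hG : G.StronglyConnected) {v : V} (e : E) (he : G.tail e = v) :
    ∃ P, G.IsPath P ∧ P ≠ [] ∧ G.src P = some v ∧ G.dst P = some v ∧
      P.head? = some e := by
  by_cases thev : G.head e = v
  · exact ⟨[e], ⟨List.isChain_singleton e, by simp [nodes], by simp [nodes]⟩, by simp,
      by simp [src, he], by simp [dst, thev], by simp⟩
  · rcases hG (G.head e) v with heq | ⟨W, hWw, hWs, hWd⟩
    · exact absurd heq thev
    · obtain ⟨P', hP'w, hP'nd, hP's, hP'd⟩ := G.walk_extract W hWw hWs hWd thev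
      cases P' with
      | nil => simp [src] at hP's
      | cons c rest =>
        have hec : G.head e = G.tail c := by simpa [src] using hP's.symm
        have hnodes : G.nodes (e :: c :: rest) = v :: G.nodes (c :: rest) := by
          rw [nodes_cons_of_chain G hec, he]
        refine ⟨e :: c :: rest, ⟨List.isChain_cons_cons.mpr ⟨hec, hP'w⟩, ?_, ?_⟩, by simp,
          by simp [src, he], by rw [dst_cons_cons]; exact hP'd, by simp⟩
        · rw [hnodes, List.dropLast_cons_of_ne_nil (by simp [nodes])]
          refine List.nodup_cons.mpr ⟨?_, hP'nd.sublist (List.dropLast_sublist _)⟩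
          have hlast : (G.nodes (c :: rest)).getLast (by simp [nodes]) = v := by
            have h1 := G.nodes_getLast?_eq_dst (W := c :: rest) (by simp)
            rw [hP'd, List.getLast?_eq_getLast (by simp [nodes])] at h1
            exact Option.some_injective _ h1
          rw [← hlast]
          exact getLast_not_mem_dropLast _ hP'nd
        · rw [hnodes, List.tail_cons]
          exact hP'nd

lemma exists_other_in [Finite E] {v : V} (hv : 1 < G.inDeg v) (f : E) (hf : G.head f = v) :
    ∃ e, G.head e = v ∧ e ≠ f := by
  rw [inDeg] at hv
  have : Nontrivial {e : E // G.head e = v} := Finite.one_lt_card_iff_nontrivial.mp hv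
  obtain ⟨e, he⟩ := exists_ne (⟨f, hf⟩ : {e : E // G.head e = v})
  exact ⟨e.1, e.2, fun hc => he (Subtype.ext hc)⟩

lemma exists_other_out [Finite E] {v : V} (hv : 1 < G.outDeg v) (f : E) (hf : G.tail f = v) :
    ∃ e, G.tail e = v ∧ e ≠ f := by
  rw [outDeg] at hv
  have : Nontrivial {e : E // G.tail e = v} := Finite.one_lt_card_iff_nontrivial.mp hv
  obtain ⟨e, he⟩ := exists_ne (⟨f, hf⟩ : {e : E // G.tail e = v})
  exact ⟨e.1, e.2, fun hc => he (Subtype.ext hc)⟩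

end MultiDigraph
/-- X-intersection Property, part ii. -/
theorem stmt_10 {V E : Type} [Fintype V] [Fintype E]
    (G : MultiDigraph V E) (hG : G.StronglyConnected)
    (v : V) (hv : G.Bivalent v) (f₁ g₁ : E)
    (hjf : G.JoinArc f₁) (hsg : G.SplitArc g₁)
    (hhf : G.head f₁ = v) (htg : G.tail g₁ = v)
    (h : G.IsOmnitig [f₁, g₁]) :
    (∀ g' : E, g' ≠ g₁ → G.tail g' = v → ¬ G.IsOmnitig [f₁, g']) ∧
    (∀ f' : E, f' ≠ f₁ → G.head f' = v → ¬ G.IsOmnitig [f', g₁]) := by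
  have hforb := h.2 1 1 le_rfl le_rfl (by norm_num)
  norm_num [List.getElem_cons_succ, List.getElem_cons_zero] at hforb
  constructor
  · intro g' hne htg' hOm'
    have hforb' := hOm'.2 1 1 le_rfl le_rfl (by norm_num)
    norm_num [List.getElem_cons_succ, List.getElem_cons_zero] at hforb'
    obtain ⟨e, he, hef⟩ := G.exists_other_in hv.1 f₁ hhf
    obtain ⟨P, hP, hPne, hPs, hPd, hPlast⟩ := G.closed_with_last hG e he
    obtain ⟨a, rest, rfl⟩ : ∃ a rest, P = a :: rest := by
      cases P with
      | nil => exact absurd rfl hPne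
      | cons a r => exact ⟨a, r, rfl⟩
    have hlastne : (a :: rest).getLast? ≠ some f₁ := by
      rw [hPlast]; simpa using hef
    by_cases hag : a = g₁
    · exact hforb' (a :: rest) ⟨hP, hPne, by rw [htg']; exact hPs,
        by rw [hhf]; exact hPd,
        by simp only [List.head?_cons, ne_eq, Option.some_inj, hag];
           exact fun hc => hne hc.symm, hlastne⟩
    · exact hforb (a :: rest) ⟨hP, hPne, by rw [htg]; exact hPs,
        by rw [hhf]; exact hPd,
        by simp only [List.head?_cons, ne_eq, Option.some_inj]; exact hag, hlastne⟩
  · intro f' hne hhf' hOm'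
    have hforb' := hOm'.2 1 1 le_rfl le_rfl (by norm_num)
    norm_num [List.getElem_cons_succ, List.getElem_cons_zero] at hforb'
    obtain ⟨e, he, heg⟩ := G.exists_other_out hv.2 g₁ htg
    obtain ⟨P, hP, hPne, hPs, hPd, hPhead⟩ := G.closed_with_first hG e he
    have hheadne : P.head? ≠ some g₁ := by
      rw [hPhead]; simpa using heg
    have hb : P.getLast? = some (P.getLast hPne) := List.getLast?_eq_getLast hPne
    by_cases hbf : P.getLast hPne = f₁
    · exact hforb' P ⟨hP, hPne, by rw [htg]; exact hPs,
        by rw [hhf']; exact hPd, hheadne,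
        by rw [hb, hbf]; simpa using fun hc => hne hc.symm⟩
    · exact hforb P ⟨hP, hPne, by rw [htg]; exact hPs,
        by rw [hhf]; exact hPd, hheadne,
        by rw [hb]; simpa using hbf⟩
end
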